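/- arXiv:math-ph/0312058 — 7 statements merged into one kernel-verified Lean document; each statement's English description precedes it below -/
import Mathlib

section
/- For every f, g, h in the ring A[w,w⁻¹] of Laurent polynomials over A, the Lax–Poisson bracket satisfies the Jacobi identity {f,{g,h}} + {g,{h,f}} + {h,{f,g}} = 0. -/
open LaurentPolynomial

/-- The derivation `d : A → A` extended coefficientwise to Laurent polynomials
(so that `d w = 0`). -/
noncomputable def dmap {A : Type*} [CommRing A] (d : A → A) (f : LaurentPolynomial A) :
    LaurentPolynomial A :=
  f.coeff.sum fun n a => C (d a) * T n

/-- The formal derivative `∂_w` on Laurent polynomials. -/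
noncomputable def wderiv {A : Type*} [CommRing A] (f : LaurentPolynomial A) :
    LaurentPolynomial A :=
  f.coeff.sum fun n a => C (n • a) * T (n - 1)

/-- The Lax–Poisson bracket `{f,g} = w·(∂_w f)·(d g) − w·(d f)·(∂_w g)`. -/
noncomputable def lax {A : Type*} [CommRing A] (d : A → A) (f g : LaurentPolynomial A) :
    LaurentPolynomial A :=
  T 1 * wderiv f * dmap d g - T 1 * dmap d f * wderiv g

/-- Abstract Jacobi identity for a bracket built from two commuting derivations. -/
theorem jacobi_abstract {R : Type*} [CommRing R] (D W : R → R)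
    (hD_add : ∀ x y, D (x + y) = D x + D y)
    (hW_add : ∀ x y, W (x + y) = W x + W y)
    (hD_mul : ∀ x y, D (x * y) = x * D y + D x * y)
    (hW_mul : ∀ x y, W (x * y) = x * W y + W x * y)
    (hcomm : ∀ x, D (W x) = W (D x)) (f g h : R) :
    (W f * D (W g * D h - D g * W h) - D f * W (W g * D h - D g * W h)) +
    (W g * D (W h * D f - D h * W f) - D g * W (W h * D f - D h * W f)) +
    (W h * D (W f * D g - D f * W g) - D h * W (W f * D g - D f * W g)) = 0 := by
  have hD0 : D 0 = 0 := by have := hD_mul 0 0; simpa using this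
  have hW0 : W 0 = 0 := by have := hW_mul 0 0; simpa using this
  have hD_neg : ∀ x, D (-x) = -D x := by
    intro x
    have := hD_add x (-x); rw [add_neg_cancel, hD0] at this
    exact eq_neg_of_add_eq_zero_right this.symm
  have hW_neg : ∀ x, W (-x) = -W x := by
    intro x
    have := hW_add x (-x); rw [add_neg_cancel, hW0] at this
    exact eq_neg_of_add_eq_zero_right this.symm
  have hD_sub : ∀ x y, D (x - y) = D x - D y := by
    intro x y; rw [sub_eq_add_neg, hD_add, hD_neg, sub_eq_add_neg]
  have hW_sub : ∀ x y, W (x - y) = W x - W y := by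
    intro x y; rw [sub_eq_add_neg, hW_add, hW_neg, sub_eq_add_neg]
  simp only [hD_sub, hW_sub, hD_mul, hW_mul, hcomm]
  ring

section AuxLemmas

variable {A : Type*} [CommRing A] (d : A → A)

theorem single_mul_single' (m n : ℤ) (a b : A) :
    (C a * T m) * (C b * T n) = C (a * b) * T (m + n) := by
  rw [map_mul, T_add]; ring

section
variable (hd_add : ∀ a b : A, d (a + b) = d a + d b)
include hd_add

theorem dmap_single (n : ℤ) (a : A) : dmap d (C a * T n) = C (d a) * T n := by
  have hd0 : d 0 = 0 := by have := hd_add 0 0; simpa using this.symm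
  rw [← single_eq_C_mul_T, dmap, AddMonoidAlgebra.coeff_single, Finsupp.sum_single_index (by simp [hd0])]

theorem dmap_add (f g : LaurentPolynomial A) :
    dmap d (f + g) = dmap d f + dmap d g := by
  have hd0 : d 0 = 0 := by have := hd_add 0 0; simpa using this.symm
  unfold dmap
  rw [AddMonoidAlgebra.coeff_add, Finsupp.sum_add_index (by simp [hd0]) (by intro n _ a b; rw [hd_add]; simp [add_mul])]

end

theorem wderiv_single (n : ℤ) (a : A) :
    wderiv (C a * T n) = C (n • a) * T (n - 1) := by
  rw [← single_eq_C_mul_T, wderiv, AddMonoidAlgebra.coeff_single, Finsupp.sum_single_index (by simp)]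

theorem wderiv_add (f g : LaurentPolynomial A) :
    wderiv (f + g) = wderiv f + wderiv g := by
  unfold wderiv
  rw [AddMonoidAlgebra.coeff_add, Finsupp.sum_add_index (by simp) (by intro n _ a b; simp [smul_add, map_add, add_mul])]

theorem W_single (n : ℤ) (a : A) :
    T 1 * wderiv (C a * T n) = C (n • a) * T n := by
  rw [wderiv_single, mul_left_comm, ← T_add]
  norm_num

theorem dmap_mul (hd_add : ∀ a b : A, d (a + b) = d a + d b)
    (hd_mul : ∀ a b : A, d (a * b) = a * d b + d a * b) (f g : LaurentPolynomial A) :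
    dmap d (f * g) = f * dmap d g + dmap d f * g := by
  induction f using LaurentPolynomial.induction_on' with
  | add p q hp hq =>
    rw [add_mul, dmap_add d hd_add, hp, hq, dmap_add d hd_add]; ring
  | C_mul_T m a =>
    induction g using LaurentPolynomial.induction_on' with
    | add p q hp hq =>
      rw [mul_add, dmap_add d hd_add, hp, hq, dmap_add d hd_add]; ring
    | C_mul_T n b =>
      rw [single_mul_single', dmap_single d hd_add, dmap_single d hd_add,
        dmap_single d hd_add, hd_mul, map_add, map_mul, map_mul, T_add]
      ring

theorem W_mul (f g : LaurentPolynomial A) :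
    T 1 * wderiv (f * g) = f * (T 1 * wderiv g) + (T 1 * wderiv f) * g := by
  induction f using LaurentPolynomial.induction_on' with
  | add p q hp hq => rw [add_mul, wderiv_add, mul_add, hp, hq, wderiv_add]; ring
  | C_mul_T m a =>
    induction g using LaurentPolynomial.induction_on' with
    | add p q hp hq => rw [mul_add, wderiv_add, mul_add, hp, hq, wderiv_add]; ring
    | C_mul_T n b =>
      rw [single_mul_single', W_single, W_single, W_single, single_mul_single',
        single_mul_single', ← add_mul, ← map_add]
      congr 2
      simp only [zsmul_eq_mul]
      push_cast
      ring

theorem dmap_W_comm (hd_add : ∀ a b : A, d (a + b) = d a + d b) (f : LaurentPolynomial A) :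
    dmap d (T 1 * wderiv f) = T 1 * wderiv (dmap d f) := by
  have hzsmul : ∀ (n : ℤ) (a : A), d (n • a) = n • d a := fun n a =>
    map_zsmul (AddMonoidHom.mk' d hd_add) n a
  induction f using LaurentPolynomial.induction_on' with
  | add p q hp hq =>
    rw [wderiv_add, mul_add, dmap_add d hd_add, hp, hq, dmap_add d hd_add, wderiv_add, mul_add]
  | C_mul_T n a =>
    rw [W_single, dmap_single d hd_add, dmap_single d hd_add, W_single, hzsmul]

theorem lax_eq (f g : LaurentPolynomial A) :
    lax d f g = (T 1 * wderiv f) * dmap d g - dmap d f * (T 1 * wderiv g) := by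
  unfold lax; ring

end AuxLemmas

/-- the Lax–Poisson bracket satisfies the Jacobi identity. -/
theorem lax_jacobi {A : Type*} [CommRing A] (d : A → A)
    (hd_add : ∀ a b : A, d (a + b) = d a + d b)
    (hd_mul : ∀ a b : A, d (a * b) = a * d b + d a * b)
    (f g h : LaurentPolynomial A) :
    lax d f (lax d g h) + lax d g (lax d h f) + lax d h (lax d f g) = 0 := by
  have key := jacobi_abstract (dmap d) (fun x => T 1 * wderiv x)
    (dmap_add d hd_add)
    (fun x y => by simp only [wderiv_add, mul_add])
    (dmap_mul d hd_add hd_mul)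
    (fun x y => W_mul x y)
    (dmap_W_comm d hd_add) f g h
  simpa only [lax_eq] using key
end

section
/- Let A be a commutative ℚ-algebra with derivation d, let N ≥ 1, and let z, z̄ ∈ A[w,w⁻¹] have supports contained in {−N, …, 1} and {−1, …, N} respectively, satisfying the string equation {z, z̄} = 1. For 1 ≤ k ≤ N+1 set H_k := (z^k)₊ + (1/2)·(z^k)₀. Then {H_k, z̄} has support contained in {−1, …, N}; i.e., assuming the string equation, the t_k-flows with 1 ≤ k ≤ N+1 preserve the polynomial reduction of z̄. -/
open LaurentPolynomial

/-- `f₊`, the strictly positive-degree part of a Laurent polynomial. -/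
noncomputable def posPart {A : Type*} [CommRing A] (f : LaurentPolynomial A) :
    LaurentPolynomial A :=
  f.coeff.sum fun n a => if 0 < n then C a * T n else 0

/-- `f₋`, the strictly negative-degree part of a Laurent polynomial. -/
noncomputable def negPart {A : Type*} [CommRing A] (f : LaurentPolynomial A) :
    LaurentPolynomial A :=
  f.coeff.sum fun n a => if n < 0 then C a * T n else 0

namespace LaxAux
open LaurentPolynomial
variable {A : Type*} [CommRing A] (d : A → A)

theorem CT_mul (a b : A) (n m : ℤ) : (C a * T n) * (C b * T m) = C (a * b) * T (n + m) := by
  rw [T_add, map_mul]; ring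

theorem dmap_zero : dmap d (0 : LaurentPolynomial A) = 0 := Finsupp.sum_zero_index

theorem wderiv_zero : wderiv (0 : LaurentPolynomial A) = 0 := Finsupp.sum_zero_index

theorem dmap_CT (hd0 : d 0 = 0) (n : ℤ) (a : A) :
    dmap d (C a * T n) = C (d a) * T n := by
  rw [← single_eq_C_mul_T, dmap, AddMonoidAlgebra.coeff_single, Finsupp.sum_single_index (by simp [hd0])]

theorem wderiv_CT (n : ℤ) (a : A) :
    wderiv (C a * T n) = C (n • a) * T (n - 1) := by
  rw [← single_eq_C_mul_T, wderiv, AddMonoidAlgebra.coeff_single, Finsupp.sum_single_index (by simp)]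

theorem dmap_add (hd0 : d 0 = 0) (hd_add : ∀ a b : A, d (a + b) = d a + d b)
    (f g : LaurentPolynomial A) : dmap d (f + g) = dmap d f + dmap d g :=
  Finsupp.sum_add_index' (fun n => by simp [hd0]) (fun n b c => by simp [hd_add, add_mul])

theorem wderiv_add (f g : LaurentPolynomial A) : wderiv (f + g) = wderiv f + wderiv g :=
  Finsupp.sum_add_index' (fun n => by simp) (fun n b c => by simp [smul_add, add_mul])

theorem dmap_neg (hd0 : d 0 = 0) (hd_add : ∀ a b : A, d (a + b) = d a + d b)
    (f : LaurentPolynomial A) : dmap d (-f) = -dmap d f := by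
  have h : dmap d (f + -f) = 0 := by rw [add_neg_cancel, dmap_zero]
  rw [dmap_add d hd0 hd_add] at h
  exact (neg_eq_of_add_eq_zero_right h).symm

theorem wderiv_neg (f : LaurentPolynomial A) : wderiv (-f) = -wderiv f := by
  have h : wderiv (f + -f) = 0 := by rw [add_neg_cancel, wderiv_zero]
  rw [wderiv_add] at h
  exact (neg_eq_of_add_eq_zero_right h).symm

theorem dmap_sub (hd0 : d 0 = 0) (hd_add : ∀ a b : A, d (a + b) = d a + d b)
    (f g : LaurentPolynomial A) : dmap d (f - g) = dmap d f - dmap d g := by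
  rw [sub_eq_add_neg, dmap_add d hd0 hd_add, dmap_neg d hd0 hd_add, sub_eq_add_neg]

theorem wderiv_sub (f g : LaurentPolynomial A) : wderiv (f - g) = wderiv f - wderiv g := by
  rw [sub_eq_add_neg, wderiv_add, wderiv_neg, sub_eq_add_neg]

theorem dmap_CT_mul (hd0 : d 0 = 0) (hd_add : ∀ a b : A, d (a + b) = d a + d b)
    (hd_mul : ∀ a b : A, d (a * b) = a * d b + d a * b)
    (n : ℤ) (a : A) (g : LaurentPolynomial A) :
    dmap d ((C a * T n) * g) = (C a * T n) * dmap d g + (C (d a) * T n) * g := by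
  induction g using LaurentPolynomial.induction_on' with
  | add p q hp hq =>
    rw [mul_add, dmap_add d hd0 hd_add, hp, hq, dmap_add d hd0 hd_add]; ring
  | C_mul_T m b =>
    rw [CT_mul, dmap_CT d hd0, dmap_CT d hd0, hd_mul, map_add, CT_mul, CT_mul, add_mul]

theorem dmap_mul (hd0 : d 0 = 0) (hd_add : ∀ a b : A, d (a + b) = d a + d b)
    (hd_mul : ∀ a b : A, d (a * b) = a * d b + d a * b)
    (f g : LaurentPolynomial A) :
    dmap d (f * g) = f * dmap d g + dmap d f * g := by
  induction f using LaurentPolynomial.induction_on' with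
  | add p q hp hq =>
    rw [add_mul, dmap_add d hd0 hd_add, hp, hq, dmap_add d hd0 hd_add]; ring
  | C_mul_T n a => rw [dmap_CT_mul d hd0 hd_add hd_mul, dmap_CT d hd0]

theorem wderiv_CT_mul (n : ℤ) (a : A) (g : LaurentPolynomial A) :
    wderiv ((C a * T n) * g) = (C a * T n) * wderiv g + (C (n • a) * T (n - 1)) * g := by
  induction g using LaurentPolynomial.induction_on' with
  | add p q hp hq => rw [mul_add, wderiv_add, hp, hq, wderiv_add]; ring
  | C_mul_T m b =>
    rw [CT_mul, wderiv_CT, wderiv_CT, CT_mul, CT_mul]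
    have h3 : (n + m) • (a * b) = a * m • b + n • a * b := by
      rw [add_smul, mul_smul_comm, smul_mul_assoc]; ring
    have h1 : (n + (m - 1) : ℤ) = n + m - 1 := by ring
    have h2 : (n - 1 + m : ℤ) = n + m - 1 := by ring
    rw [h3, map_add, add_mul, h1, h2]

theorem wderiv_mul (f g : LaurentPolynomial A) :
    wderiv (f * g) = f * wderiv g + wderiv f * g := by
  induction f using LaurentPolynomial.induction_on' with
  | add p q hp hq => rw [add_mul, wderiv_add, hp, hq, wderiv_add]; ring
  | C_mul_T n a => rw [wderiv_CT_mul, wderiv_CT]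

theorem lax_mul_left (hd0 : d 0 = 0) (hd_add : ∀ a b : A, d (a + b) = d a + d b)
    (hd_mul : ∀ a b : A, d (a * b) = a * d b + d a * b)
    (f g h : LaurentPolynomial A) :
    lax d (f * g) h = f * lax d g h + g * lax d f h := by
  simp only [lax, dmap_mul d hd0 hd_add hd_mul, wderiv_mul]
  ring

theorem lax_sub_left (hd0 : d 0 = 0) (hd_add : ∀ a b : A, d (a + b) = d a + d b)
    (f g h : LaurentPolynomial A) :
    lax d (f - g) h = lax d f h - lax d g h := by
  simp only [lax, dmap_sub d hd0 hd_add, wderiv_sub]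
  ring

theorem support_CT (a : A) (n : ℤ) : (C a * T n : LaurentPolynomial A).coeff.support ⊆ {n} := by
  rw [← single_eq_C_mul_T]; exact Finsupp.support_single_subset

theorem support_C (a : A) : (C a : LaurentPolynomial A).coeff.support ⊆ {0} := by
  have := support_CT a 0
  rwa [T_zero, mul_one] at this

theorem support_T (n : ℤ) : (T n : LaurentPolynomial A).coeff.support ⊆ {n} := by
  have := support_CT (1 : A) n
  rwa [map_one, one_mul] at this

theorem support_dmap (f : LaurentPolynomial A) : (dmap d f).coeff.support ⊆ f.coeff.support := by
  intro n hn
  simp only [dmap, AddMonoidAlgebra.coeff_finsuppSum] at hn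
  rcases Finset.mem_biUnion.1 (Finsupp.support_sum hn) with ⟨m, hm, hnm⟩
  have := Finset.mem_singleton.1 (support_CT (d (f.coeff m)) m hnm)
  exact this ▸ hm

theorem support_wderiv (f : LaurentPolynomial A) :
    ∀ n ∈ (wderiv f).coeff.support, ∃ m ∈ f.coeff.support, n = m - 1 := by
  intro n hn
  simp only [wderiv, AddMonoidAlgebra.coeff_finsuppSum] at hn
  rcases Finset.mem_biUnion.1 (Finsupp.support_sum hn) with ⟨m, hm, hnm⟩
  have := Finset.mem_singleton.1 (support_CT (m • f.coeff m) (m - 1) hnm)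
  exact ⟨m, hm, this⟩

theorem support_posPart (f : LaurentPolynomial A) :
    ∀ n ∈ (_root_.posPart f).coeff.support, 0 < n := by
  intro n hn
  simp only [_root_.posPart, AddMonoidAlgebra.coeff_finsuppSum] at hn
  rcases Finset.mem_biUnion.1 (Finsupp.support_sum hn) with ⟨m, hm, hnm⟩
  by_cases h : 0 < m
  · rw [if_pos h] at hnm
    have := Finset.mem_singleton.1 (support_CT (f.coeff m) m hnm)
    omega
  · rw [if_neg h] at hnm
    simp at hnm

theorem support_negPart (f : LaurentPolynomial A) :
    ∀ n ∈ (_root_.negPart f).coeff.support, n < 0 := by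
  intro n hn
  simp only [_root_.negPart, AddMonoidAlgebra.coeff_finsuppSum] at hn
  rcases Finset.mem_biUnion.1 (Finsupp.support_sum hn) with ⟨m, hm, hnm⟩
  by_cases h : m < 0
  · rw [if_pos h] at hnm
    have := Finset.mem_singleton.1 (support_CT (f.coeff m) m hnm)
    omega
  · rw [if_neg h] at hnm
    simp at hnm

theorem hi_mul {f g : LaurentPolynomial A} {a b : ℤ}
    (hf : ∀ n ∈ f.coeff.support, n ≤ a) (hg : ∀ n ∈ g.coeff.support, n ≤ b) :
    ∀ n ∈ (f * g).coeff.support, n ≤ a + b := by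
  intro n hn
  rcases Finset.mem_add.1 (AddMonoidAlgebra.support_coeff_mul_subset f g hn) with ⟨p, hp, q, hq, rfl⟩
  exact add_le_add (hf p hp) (hg q hq)

theorem lo_mul {f g : LaurentPolynomial A} {a b : ℤ}
    (hf : ∀ n ∈ f.coeff.support, a ≤ n) (hg : ∀ n ∈ g.coeff.support, b ≤ n) :
    ∀ n ∈ (f * g).coeff.support, a + b ≤ n := by
  intro n hn
  rcases Finset.mem_add.1 (AddMonoidAlgebra.support_coeff_mul_subset f g hn) with ⟨p, hp, q, hq, rfl⟩
  exact add_le_add (hf p hp) (hg q hq)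

theorem mem_sub_support {f g : LaurentPolynomial A} {n : ℤ} (hn : n ∈ (f - g).coeff.support) :
    n ∈ f.coeff.support ∨ n ∈ g.coeff.support := by
  by_contra h
  push_neg at h
  have hf := Finsupp.notMem_support_iff.1 h.1
  have hg := Finsupp.notMem_support_iff.1 h.2
  have : (f - g).coeff n = 0 := by
    rw [AddMonoidAlgebra.coeff_sub, Finsupp.sub_apply, hf, hg, sub_zero]
  exact Finsupp.mem_support_iff.1 hn this

theorem mem_add_support {f g : LaurentPolynomial A} {n : ℤ} (hn : n ∈ (f + g).coeff.support) :
    n ∈ f.coeff.support ∨ n ∈ g.coeff.support := by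
  by_contra h
  push_neg at h
  have hf := Finsupp.notMem_support_iff.1 h.1
  have hg := Finsupp.notMem_support_iff.1 h.2
  have : (f + g).coeff n = 0 := by
    rw [AddMonoidAlgebra.coeff_add, Finsupp.add_apply, hf, hg, add_zero]
  exact Finsupp.mem_support_iff.1 hn this

/-- decomposition `f = f₊ + f₋ + C (f 0)` -/
theorem decomp (f : LaurentPolynomial A) :
    _root_.posPart f + _root_.negPart f + C (f.coeff 0) = f := by
  have h0 : (f.coeff.sum fun n a => if n = 0 then C a * T n else 0) = C (f.coeff 0) := by
    rw [Finsupp.sum, Finset.sum_ite_eq' f.coeff.support (0 : ℤ) (fun n => C (f.coeff n) * T n)]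
    by_cases h : (0 : ℤ) ∈ f.coeff.support
    · rw [if_pos h, T_zero, mul_one]
    · rw [if_neg h, Finsupp.notMem_support_iff.1 h, map_zero]
  rw [_root_.posPart, _root_.negPart, ← h0, ← Finsupp.sum_add, ← Finsupp.sum_add]
  have : (f.coeff.sum fun n a =>
      ((if 0 < n then C a * T n else 0) + (if n < 0 then C a * T n else 0)) +
        (if n = 0 then C a * T n else 0)) = f.coeff.sum fun n a => C a * T n := by
    apply Finsupp.sum_congr
    intro n _
    rcases lt_trichotomy n 0 with h | h | h
    · rw [if_neg (by omega), if_pos h, if_neg (by omega)]; ring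
    · rw [if_neg (by omega), if_neg (by omega), if_pos h]; ring
    · rw [if_pos h, if_neg (by omega), if_neg (by omega)]; ring
  rw [this]
  conv_rhs => rw [← AddMonoidAlgebra.sum_coeff_single f]
  exact Finsupp.sum_congr fun n _ => (single_eq_C_mul_T _ _).symm

end LaxAux

open LaxAux in
/-- assuming the string equation `{z, z̄} = 1`, the `t_k`-flows with
`1 ≤ k ≤ N+1` preserve the polynomial reduction of `z̄`: with
`H_k = (z^k)₊ + (1/2)(z^k)₀`, the bracket `{H_k, z̄}` has support in `{−1,…,N}`. -/
theorem t_flow_preserves_poly_reduction_of_zbar {A : Type*} [CommRing A] [Algebra ℚ A]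
    (d : A → A)
    (hd_add : ∀ a b : A, d (a + b) = d a + d b)
    (hd_mul : ∀ a b : A, d (a * b) = a * d b + d a * b)
    (N k : ℕ) (hN : 1 ≤ N) (hk1 : 1 ≤ k) (hk2 : k ≤ N + 1)
    (z zbar : LaurentPolynomial A)
    (hz : z.coeff.support ⊆ Finset.Icc (-(N : ℤ)) 1)
    (hzbar : zbar.coeff.support ⊆ Finset.Icc (-1 : ℤ) (N : ℤ))
    (hstring : lax d z zbar = 1)
    (Hk : LaurentPolynomial A)
    (hHk : Hk = posPart (z ^ k) + C ((1/2 : ℚ) • ((z ^ k).coeff (0 : ℤ)))) :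
    (lax d Hk zbar).coeff.support ⊆ Finset.Icc (-1 : ℤ) (N : ℤ) := by
  classical
  have hd0 : d 0 = 0 := by
    have h : d 0 = d 0 + d 0 := by simpa using hd_add 0 0
    exact left_eq_add.mp h
  obtain ⟨m, rfl⟩ : ∃ m : ℕ, k = m + 1 := ⟨k - 1, by omega⟩
  -- Leibniz power formula
  have hlaxpow : ∀ j : ℕ, lax d (z ^ (j + 1)) zbar
      = ((j + 1 : ℕ) : LaurentPolynomial A) * (z ^ j * lax d z zbar) := by
    intro j
    induction j with
    | zero => simp
    | succ j ih =>
      rw [pow_succ, lax_mul_left d hd0 hd_add hd_mul, ih]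
      push_cast
      ring
  have hlz : lax d (z ^ (m + 1)) zbar = ((m + 1 : ℕ) : LaurentPolynomial A) * z ^ m := by
    rw [hlaxpow m, hstring, mul_one]
  set c0 := (z ^ (m + 1)).coeff (0 : ℤ) with hc0def
  have hC : C c0 = C ((1/2 : ℚ) • c0) + C ((1/2 : ℚ) • c0) := by
    rw [← map_add, ← add_smul]
    norm_num
  have hHk' : Hk = z ^ (m + 1) - negPart (z ^ (m + 1)) - C ((1/2 : ℚ) • c0) := by
    have hde := decomp (z ^ (m + 1))
    rw [hHk]
    linear_combination hde - hC
  have hlaxHk : lax d Hk zbar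
      = ((m + 1 : ℕ) : LaurentPolynomial A) * z ^ m
        - lax d (negPart (z ^ (m + 1))) zbar
        - lax d (C ((1/2 : ℚ) • c0)) zbar := by
    rw [hHk', lax_sub_left d hd0 hd_add, lax_sub_left d hd0 hd_add, hlz]
  -- basic support bounds
  have hiz : ∀ n ∈ z.coeff.support, n ≤ (1 : ℤ) := fun n hn => (Finset.mem_Icc.1 (hz hn)).2
  have hizbar : ∀ n ∈ zbar.coeff.support, n ≤ (N : ℤ) := fun n hn => (Finset.mem_Icc.1 (hzbar hn)).2
  have lozbar : ∀ n ∈ zbar.coeff.support, (-1 : ℤ) ≤ n := fun n hn => (Finset.mem_Icc.1 (hzbar hn)).1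
  have hiT1 : ∀ n ∈ (T 1 : LaurentPolynomial A).coeff.support, n ≤ (1 : ℤ) := by
    intro n hn
    have := Finset.mem_singleton.1 (support_T 1 hn); omega
  have loT1 : ∀ n ∈ (T 1 : LaurentPolynomial A).coeff.support, (1 : ℤ) ≤ n := by
    intro n hn
    have := Finset.mem_singleton.1 (support_T 1 hn); omega
  have hizm : ∀ j : ℕ, ∀ n ∈ (z ^ j).coeff.support, n ≤ (j : ℤ) := by
    intro j
    induction j with
    | zero =>
      intro n hn
      rw [pow_zero, ← T_zero] at hn
      have := Finset.mem_singleton.1 (support_T 0 hn); omega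
    | succ j ih =>
      intro n hn
      rw [pow_succ] at hn
      have := hi_mul ih hiz n hn
      push_cast at this ⊢
      omega
  have hidzbar : ∀ n ∈ (dmap d zbar).coeff.support, n ≤ (N : ℤ) :=
    fun n hn => hizbar n (support_dmap d zbar hn)
  have lodzbar : ∀ n ∈ (dmap d zbar).coeff.support, (-1 : ℤ) ≤ n :=
    fun n hn => lozbar n (support_dmap d zbar hn)
  have hiwzbar : ∀ n ∈ (wderiv zbar).coeff.support, n ≤ (N : ℤ) - 1 := by
    intro n hn
    obtain ⟨p, hp, rfl⟩ := support_wderiv zbar n hn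
    have := hizbar p hp; omega
  have lowzbar : ∀ n ∈ (wderiv zbar).coeff.support, (-2 : ℤ) ≤ n := by
    intro n hn
    obtain ⟨p, hp, rfl⟩ := support_wderiv zbar n hn
    have := lozbar p hp; omega
  -- lower bound, directly from `Hk` having support in `[0, ∞)`
  have loHk : ∀ n ∈ Hk.coeff.support, (0 : ℤ) ≤ n := by
    intro n hn
    rw [hHk] at hn
    rcases mem_add_support hn with h | h
    · exact le_of_lt (support_posPart _ n h)
    · have := Finset.mem_singleton.1 (support_C _ h); omega
  have lowHk : ∀ n ∈ (wderiv Hk).coeff.support, (-1 : ℤ) ≤ n := by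
    intro n hn
    obtain ⟨p, hp, rfl⟩ := support_wderiv Hk n hn
    have := loHk p hp; omega
  have lodHk : ∀ n ∈ (dmap d Hk).coeff.support, (0 : ℤ) ≤ n :=
    fun n hn => loHk n (support_dmap d Hk hn)
  have hlo : ∀ n ∈ (lax d Hk zbar).coeff.support, (-1 : ℤ) ≤ n := by
    intro n hn
    simp only [lax] at hn
    rcases mem_sub_support hn with h | h
    · have := lo_mul (lo_mul loT1 lowHk) lodzbar n h; omega
    · have := lo_mul (lo_mul loT1 lodHk) lowzbar n h; omega
  -- upper bound, using the decomposition
  have hineg : ∀ n ∈ (negPart (z ^ (m + 1))).coeff.support, n ≤ (-1 : ℤ) := by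
    intro n hn
    have := support_negPart (z ^ (m + 1)) n hn; omega
  have hiwneg : ∀ n ∈ (wderiv (negPart (z ^ (m + 1)))).coeff.support, n ≤ (-2 : ℤ) := by
    intro n hn
    obtain ⟨p, hp, rfl⟩ := support_wderiv _ n hn
    have := hineg p hp; omega
  have hidneg : ∀ n ∈ (dmap d (negPart (z ^ (m + 1)))).coeff.support, n ≤ (-1 : ℤ) :=
    fun n hn => hineg n (support_dmap d _ hn)
  have hiC : ∀ n ∈ (C ((1/2 : ℚ) • c0) : LaurentPolynomial A).coeff.support, n ≤ (0 : ℤ) := by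
    intro n hn
    have := Finset.mem_singleton.1 (support_C _ hn); omega
  have hiwC : ∀ n ∈ (wderiv (C ((1/2 : ℚ) • c0) : LaurentPolynomial A)).coeff.support,
      n ≤ (-1 : ℤ) := by
    intro n hn
    obtain ⟨p, hp, rfl⟩ := support_wderiv _ n hn
    have := hiC p hp; omega
  have hidC : ∀ n ∈ (dmap d (C ((1/2 : ℚ) • c0) : LaurentPolynomial A)).coeff.support,
      n ≤ (0 : ℤ) :=
    fun n hn => hiC n (support_dmap d _ hn)
  have hiCast : ∀ n ∈ (((m + 1 : ℕ) : LaurentPolynomial A)).coeff.support, n ≤ (0 : ℤ) := by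
    intro n hn
    rw [show ((m + 1 : ℕ) : LaurentPolynomial A) = C ((m + 1 : ℕ) : A) from
      (map_natCast (C : A →+* LaurentPolynomial A) (m + 1)).symm] at hn
    have := Finset.mem_singleton.1 (support_C _ hn); omega
  have hhi : ∀ n ∈ (lax d Hk zbar).coeff.support, n ≤ (N : ℤ) := by
    intro n hn
    rw [hlaxHk] at hn
    rcases mem_sub_support hn with h | h
    · rcases mem_sub_support h with h1 | h2
      · have := hi_mul hiCast (hizm m) n h1
        have hmN : (m : ℤ) ≤ (N : ℤ) := by
          have : m + 1 ≤ N + 1 := hk2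
          omega
        omega
      · simp only [lax] at h2
        rcases mem_sub_support h2 with ha | hb
        · have := hi_mul (hi_mul hiT1 hiwneg) hidzbar n ha; omega
        · have := hi_mul (hi_mul hiT1 hidneg) hiwzbar n hb; omega
    · simp only [lax] at h
      rcases mem_sub_support h with ha | hb
      · have := hi_mul (hi_mul hiT1 hiwC) hidzbar n ha; omega
      · have := hi_mul (hi_mul hiT1 hidC) hiwzbar n hb; omega
  intro n hn
  rw [Finset.mem_Icc]
  exact ⟨hlo n hn, hhi n hn⟩
end

section
/- Let A be an integral domain that is a ℚ-algebra, with derivation d, and let N ≥ 1. Let z, z̄ ∈ A[w,w⁻¹] have supports contained in {−N, …, 1} and {−1, …, N} respectively, with the coefficient of w¹ in z nonzero and the coefficient of w⁻¹ in z̄ nonzero. Set H_{N+1} := (z^{N+1})₊ + (1/2)·(z^{N+1})₀ and H̄_{N+1} := (z̄^{N+1})₋ + (1/2)·(z̄^{N+1})₀. If {H̄_{N+1}, z} has support contained in {i ∈ ℤ : i ≥ −N} and {H_{N+1}, z̄} has support contained in {i ∈ ℤ : i ≤ N}, then {z, z̄} has support contained in {0}, i.e. {z, z̄} is independent of w. (This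 is the key step showing the string equation is a necessary condition for the consistency of the polynomial reduction with the Toda flows.) -/
open LaurentPolynomial
open Pointwise

namespace StringEq
variable {A : Type*} [CommRing A]

lemma coeffsum (f : LaurentPolynomial A) (φ : ℤ → A → A) (hφ : ∀ n, φ n 0 = 0) (t m : ℤ) :
    (f.coeff.sum (fun n a => C (φ n a) * T (n + t)) : LaurentPolynomial A).coeff m = φ (m - t) (f.coeff (m - t)) := by
  classical
  simp only [← single_eq_C_mul_T]
  rw [AddMonoidAlgebra.coeff_finsuppSum, Finsupp.sum_apply, Finsupp.sum]
  simp only [AddMonoidAlgebra.coeff_single]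
  rw [Finset.sum_congr rfl (fun n _ => by
    rw [Finsupp.single_apply, if_congr (by omega : n + t = m ↔ n = m - t) rfl rfl])]
  rw [Finset.sum_ite_eq' f.coeff.support (m - t) (fun n => φ n (f.coeff n))]
  split_ifs with h
  · rfl
  · rw [Finsupp.notMem_support_iff.mp h, hφ]

lemma dmap_apply (d : A → A) (hd0 : d 0 = 0) (f : LaurentPolynomial A) (m : ℤ) :
    (dmap d f).coeff m = d (f.coeff m) := by
  have h := coeffsum f (fun _ a => d a) (fun _ => hd0) 0 m
  simp only [add_zero, sub_zero] at h
  rw [dmap]; exact h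

lemma wderiv_apply (f : LaurentPolynomial A) (m : ℤ) :
    (wderiv f).coeff m = (m + 1) • f.coeff (m + 1) := by
  have h := coeffsum f (fun n a => n • a) (fun n => smul_zero n) (-1) m
  simp only [← sub_eq_add_neg, sub_neg_eq_add] at h
  rw [wderiv]; exact h

lemma T_mul_apply (n : ℤ) (f : LaurentPolynomial A) (m : ℤ) :
    (T n * f : LaurentPolynomial A).coeff m = f.coeff (m - n) := by
  have h : (T n : LaurentPolynomial A) = AddMonoidAlgebra.single n 1 := by
    rw [single_eq_C_mul_T, map_one, one_mul]
  rw [h, AddMonoidAlgebra.coeff_single_mul_apply, one_mul, neg_add_eq_sub]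

lemma Twderiv_apply (f : LaurentPolynomial A) (m : ℤ) :
    (T 1 * wderiv f : LaurentPolynomial A).coeff m = m • f.coeff m := by
  rw [T_mul_apply, wderiv_apply, sub_add_cancel]

lemma dmap_add (d : A → A) (hd_add : ∀ a b : A, d (a + b) = d a + d b)
    (f g : LaurentPolynomial A) : dmap d (f + g) = dmap d f + dmap d g := by
  have hd0 : d 0 = 0 := by
    have := hd_add 0 0; simpa using this.symm
  ext m
  rw [AddMonoidAlgebra.coeff_add, Finsupp.add_apply, dmap_apply d hd0, dmap_apply d hd0, dmap_apply d hd0,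
    AddMonoidAlgebra.coeff_add, Finsupp.add_apply, hd_add]

lemma wderiv_add (f g : LaurentPolynomial A) : wderiv (f + g) = wderiv f + wderiv g := by
  ext m
  rw [AddMonoidAlgebra.coeff_add, Finsupp.add_apply, wderiv_apply, wderiv_apply, wderiv_apply,
    AddMonoidAlgebra.coeff_add, Finsupp.add_apply, smul_add]

lemma dmap_single (d : A → A) (hd0 : d 0 = 0) (a : A) (n : ℤ) :
    dmap d (C a * T n) = C (d a) * T n := by
  rw [dmap, ← single_eq_C_mul_T, AddMonoidAlgebra.coeff_single, Finsupp.sum_single_index (by simp [hd0])]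

lemma wderiv_single (a : A) (n : ℤ) :
    wderiv (C a * T n) = C (n • a) * T (n - 1) := by
  rw [wderiv, ← single_eq_C_mul_T, AddMonoidAlgebra.coeff_single, Finsupp.sum_single_index (by simp)]

lemma dmap_mul (d : A → A) (hd_add : ∀ a b : A, d (a + b) = d a + d b)
    (hd_mul : ∀ a b : A, d (a * b) = a * d b + d a * b) (f g : LaurentPolynomial A) :
    dmap d (f * g) = f * dmap d g + dmap d f * g := by
  have hd0 : d 0 = 0 := by
    have := hd_add 0 0; simpa using this.symm
  induction f using LaurentPolynomial.induction_on' with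
  | add p q hp hq =>
    rw [add_mul, dmap_add d hd_add, hp, hq, dmap_add d hd_add]; ring
  | C_mul_T n a =>
    induction g using LaurentPolynomial.induction_on' with
    | add p q hp hq =>
      rw [mul_add, dmap_add d hd_add, hp, hq, dmap_add d hd_add]; ring
    | C_mul_T k b =>
      rw [show (C a * T n) * (C b * T k) = C (a * b) * T (n + k) by
        rw [T_add, map_mul]; ring]
      rw [dmap_single d hd0, dmap_single d hd0, dmap_single d hd0, hd_mul,
        map_add, map_mul, map_mul, T_add]
      ring

lemma wderiv_mul (f g : LaurentPolynomial A) :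
    wderiv (f * g) = f * wderiv g + wderiv f * g := by
  induction f using LaurentPolynomial.induction_on' with
  | add p q hp hq => rw [add_mul, wderiv_add, hp, hq, wderiv_add]; ring
  | C_mul_T n a =>
    induction g using LaurentPolynomial.induction_on' with
    | add p q hp hq => rw [mul_add, wderiv_add, hp, hq, wderiv_add]; ring
    | C_mul_T k b =>
      rw [show (C a * T n) * (C b * T k) = C (a * b) * T (n + k) by
        rw [T_add, map_mul]; ring]
      rw [wderiv_single, wderiv_single, wderiv_single]
      rw [show (n + k) • (a * b) = a * (k • b) + (n • a) * b by
        rw [add_smul, mul_smul_comm, smul_mul_assoc, add_comm]]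
      rw [show C a * T n * (C (k • b) * T (k - 1)) = C (a * (k • b)) * T (n + k - 1) by
          rw [show n + k - 1 = n + (k - 1) by ring, T_add, map_mul]; ring,
        show C (n • a) * T (n - 1) * (C b * T k) = C ((n • a) * b) * T (n + k - 1) by
          rw [show n + k - 1 = (n - 1) + k by ring, T_add, map_mul]; ring,
        map_add]
      ring

lemma lax_antisymm (d : A → A) (f g : LaurentPolynomial A) :
    lax d f g = - lax d g f := by
  rw [lax, lax]; ring

lemma lax_add_left (d : A → A) (hd_add : ∀ a b : A, d (a + b) = d a + d b)
    (f g h : LaurentPolynomial A) :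
    lax d (f + g) h = lax d f h + lax d g h := by
  rw [lax, lax, lax, dmap_add d hd_add, wderiv_add]; ring

lemma lax_mul_left (d : A → A) (hd_add : ∀ a b : A, d (a + b) = d a + d b)
    (hd_mul : ∀ a b : A, d (a * b) = a * d b + d a * b)
    (f g h : LaurentPolynomial A) :
    lax d (f * g) h = f * lax d g h + g * lax d f h := by
  rw [lax, lax, lax, dmap_mul d hd_add hd_mul, wderiv_mul]; ring

lemma lax_pow (d : A → A) (hd_add : ∀ a b : A, d (a + b) = d a + d b)
    (hd_mul : ∀ a b : A, d (a * b) = a * d b + d a * b)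
    (f h : LaurentPolynomial A) (k : ℕ) :
    lax d (f ^ (k + 1)) h = (k + 1) • (f ^ k * lax d f h) := by
  induction k with
  | zero => simp [pow_one, pow_zero, one_smul]
  | succ k ih =>
    rw [pow_succ, lax_mul_left d hd_add hd_mul, ih, mul_smul_comm,
      show f * (f ^ k * lax d f h) = f ^ (k + 1) * lax d f h by rw [pow_succ']; ring,
      succ_nsmul]
    ring_nf

lemma supp_Twderiv (f : LaurentPolynomial A) :
    (T 1 * wderiv f : LaurentPolynomial A).coeff.support ⊆ f.coeff.support := by
  intro m hm
  rw [Finsupp.mem_support_iff] at hm ⊢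
  rw [Twderiv_apply] at hm
  intro h; exact hm (by rw [h, smul_zero])

lemma supp_dmap (d : A → A) (hd0 : d 0 = 0) (f : LaurentPolynomial A) :
    (dmap d f).coeff.support ⊆ f.coeff.support := by
  intro m hm
  rw [Finsupp.mem_support_iff] at hm ⊢
  rw [dmap_apply d hd0] at hm
  intro h; exact hm (by rw [h, hd0])

lemma lax_support (d : A → A) (hd0 : d 0 = 0) (f g : LaurentPolynomial A) :
    (lax d f g).coeff.support ⊆ f.coeff.support + g.coeff.support := by
  classical
  intro m hm
  rw [lax, AddMonoidAlgebra.coeff_sub] at hm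
  have h1 := Finsupp.support_sub hm
  rcases Finset.mem_union.mp h1 with h | h
  · have h2 := AddMonoidAlgebra.support_coeff_mul_subset (T 1 * wderiv f) (dmap d g) h
    rcases Finset.mem_add.mp h2 with ⟨i, hi, j, hj, hij⟩
    exact Finset.mem_add.mpr ⟨i, supp_Twderiv f hi, j, supp_dmap d hd0 g hj, hij⟩
  · have : (T 1 * dmap d f * wderiv g : LaurentPolynomial A)
        = dmap d f * (T 1 * wderiv g) := by ring
    rw [this] at h
    have h2 := AddMonoidAlgebra.support_coeff_mul_subset (dmap d f) (T 1 * wderiv g) h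
    rcases Finset.mem_add.mp h2 with ⟨i, hi, j, hj, hij⟩
    exact Finset.mem_add.mpr ⟨i, supp_dmap d hd0 f hi, j, supp_Twderiv g hj, hij⟩

lemma mul_apply_low (f g : LaurentPolynomial A) (a c : ℤ)
    (hf : ∀ m ∈ f.coeff.support, a ≤ m) (hg : ∀ m ∈ g.coeff.support, c ≤ m) :
    (f * g : LaurentPolynomial A).coeff (a + c) = f.coeff a * g.coeff c := by
  classical
  set F : LaurentPolynomial A := f.erase a with hF
  have hdecomp : f = C (f.coeff a) * T a + F := by
    rw [← single_eq_C_mul_T]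
    exact (AddMonoidAlgebra.single_add_erase a f).symm
  have h0 : (F * g : LaurentPolynomial A).coeff (a + c) = 0 := by
    by_contra h
    rcases Finset.mem_add.mp
      (AddMonoidAlgebra.support_coeff_mul_subset F g (Finsupp.mem_support_iff.mpr h)) with ⟨i, hi, j, hj, hij⟩
    have hi' : i ∈ f.coeff.support.erase a := by
      simpa [hF, Finsupp.support_erase, AddMonoidAlgebra.coeff_erase] using hi
    rw [Finset.mem_erase] at hi'
    have h1 := hf i hi'.2
    have h2 := hg j hj
    have h3 : a < i := lt_of_le_of_ne h1 (Ne.symm hi'.1)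
    omega
  nth_rewrite 1 [hdecomp]
  rw [add_mul, AddMonoidAlgebra.coeff_add, Finsupp.add_apply, h0, add_zero, ← single_eq_C_mul_T,
    AddMonoidAlgebra.coeff_single_mul_apply, neg_add_cancel_left]

lemma mul_apply_high (f g : LaurentPolynomial A) (a c : ℤ)
    (hf : ∀ m ∈ f.coeff.support, m ≤ a) (hg : ∀ m ∈ g.coeff.support, m ≤ c) :
    (f * g : LaurentPolynomial A).coeff (a + c) = f.coeff a * g.coeff c := by
  classical
  set F : LaurentPolynomial A := f.erase a with hF
  have hdecomp : f = C (f.coeff a) * T a + F := by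
    rw [← single_eq_C_mul_T]
    exact (AddMonoidAlgebra.single_add_erase a f).symm
  have h0 : (F * g : LaurentPolynomial A).coeff (a + c) = 0 := by
    by_contra h
    rcases Finset.mem_add.mp
      (AddMonoidAlgebra.support_coeff_mul_subset F g (Finsupp.mem_support_iff.mpr h)) with ⟨i, hi, j, hj, hij⟩
    have hi' : i ∈ f.coeff.support.erase a := by
      simpa [hF, Finsupp.support_erase, AddMonoidAlgebra.coeff_erase] using hi
    rw [Finset.mem_erase] at hi'
    have h1 := hf i hi'.2
    have h2 := hg j hj
    have h3 : i < a := lt_of_le_of_ne h1 hi'.1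
    omega
  nth_rewrite 1 [hdecomp]
  rw [add_mul, AddMonoidAlgebra.coeff_add, Finsupp.add_apply, h0, add_zero, ← single_eq_C_mul_T,
    AddMonoidAlgebra.coeff_single_mul_apply, neg_add_cancel_left]

lemma pow_supp_low (f : LaurentPolynomial A) (a : ℤ) (hf : ∀ m ∈ f.coeff.support, a ≤ m) (k : ℕ) :
    ∀ m ∈ (f ^ k : LaurentPolynomial A).coeff.support, (k : ℤ) * a ≤ m := by
  induction k with
  | zero =>
    intro m hm
    rw [pow_zero] at hm
    have h1 : ((1 : LaurentPolynomial A)).coeff.support ⊆ {0} := by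
      rw [show (1 : LaurentPolynomial A) = AddMonoidAlgebra.single 0 1 from rfl]
      exact Finsupp.support_single_subset
    have := h1 hm
    simp only [Finset.mem_singleton] at this
    omega
  | succ k ih =>
    intro m hm
    rw [pow_succ] at hm
    rcases Finset.mem_add.mp (AddMonoidAlgebra.support_coeff_mul_subset _ _ hm) with ⟨i, hi, j, hj, hij⟩
    have := ih i hi
    have := hf j hj
    have hka : ((k : ℤ) + 1) * a = (k : ℤ) * a + a := by ring
    push_cast
    omega

lemma pow_supp_high (f : LaurentPolynomial A) (a : ℤ) (hf : ∀ m ∈ f.coeff.support, m ≤ a) (k : ℕ) :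
    ∀ m ∈ (f ^ k : LaurentPolynomial A).coeff.support, m ≤ (k : ℤ) * a := by
  induction k with
  | zero =>
    intro m hm
    rw [pow_zero] at hm
    have h1 : ((1 : LaurentPolynomial A)).coeff.support ⊆ {0} := by
      rw [show (1 : LaurentPolynomial A) = AddMonoidAlgebra.single 0 1 from rfl]
      exact Finsupp.support_single_subset
    have := h1 hm
    simp only [Finset.mem_singleton] at this
    omega
  | succ k ih =>
    intro m hm
    rw [pow_succ] at hm
    rcases Finset.mem_add.mp (AddMonoidAlgebra.support_coeff_mul_subset _ _ hm) with ⟨i, hi, j, hj, hij⟩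
    have := ih i hi
    have := hf j hj
    have hka : ((k : ℤ) + 1) * a = (k : ℤ) * a + a := by ring
    push_cast
    omega

lemma pow_coeff_low (f : LaurentPolynomial A) (a : ℤ) (hf : ∀ m ∈ f.coeff.support, a ≤ m) (k : ℕ) :
    (f ^ k : LaurentPolynomial A).coeff ((k : ℤ) * a) = (f.coeff a) ^ k := by
  induction k with
  | zero =>
    rw [pow_zero, pow_zero, show ((0 : ℕ) : ℤ) * a = 0 by ring]
    rw [show (1 : LaurentPolynomial A) = AddMonoidAlgebra.single 0 1 from rfl]
    exact Finsupp.single_eq_same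
  | succ k ih =>
    rw [pow_succ, show ((k + 1 : ℕ) : ℤ) * a = (k : ℤ) * a + a by push_cast; ring]
    rw [mul_apply_low (f ^ k) f ((k : ℤ) * a) a (pow_supp_low f a hf k) hf, ih, pow_succ]

lemma pow_coeff_high (f : LaurentPolynomial A) (a : ℤ) (hf : ∀ m ∈ f.coeff.support, m ≤ a) (k : ℕ) :
    (f ^ k : LaurentPolynomial A).coeff ((k : ℤ) * a) = (f.coeff a) ^ k := by
  induction k with
  | zero =>
    rw [pow_zero, pow_zero, show ((0 : ℕ) : ℤ) * a = 0 by ring]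
    rw [show (1 : LaurentPolynomial A) = AddMonoidAlgebra.single 0 1 from rfl]
    exact Finsupp.single_eq_same
  | succ k ih =>
    rw [pow_succ, show ((k + 1 : ℕ) : ℤ) * a = (k : ℤ) * a + a by push_cast; ring]
    rw [mul_apply_high (f ^ k) f ((k : ℤ) * a) a (pow_supp_high f a hf k) hf, ih, pow_succ]


lemma negPart_apply (f : LaurentPolynomial A) (m : ℤ) :
    (negPart f).coeff m = if m < 0 then f.coeff m else 0 := by
  have h := coeffsum f (fun n a => if n < 0 then a else 0) (fun n => by simp) 0 m
  simp only [add_zero, sub_zero] at h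
  rw [_root_.negPart, show (f.coeff.sum fun n a => if n < 0 then C a * T n else 0)
      = f.coeff.sum fun n a => C (if n < 0 then a else 0) * T n from
    Finsupp.sum_congr (fun n _ => by split_ifs <;> simp)]
  exact h

lemma posPart_apply (f : LaurentPolynomial A) (m : ℤ) :
    (posPart f).coeff m = if 0 < m then f.coeff m else 0 := by
  have h := coeffsum f (fun n a => if 0 < n then a else 0) (fun n => by simp) 0 m
  simp only [add_zero, sub_zero] at h
  rw [_root_.posPart, show (f.coeff.sum fun n a => if 0 < n then C a * T n else 0)
      = f.coeff.sum fun n a => C (if 0 < n then a else 0) * T n from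
    Finsupp.sum_congr (fun n _ => by split_ifs <;> simp)]
  exact h

lemma C_apply' (c : A) (k : ℤ) (hk : k ≠ 0) : (C c : LaurentPolynomial A).coeff k = 0 := by
  rw [show (C c : LaurentPolynomial A) = AddMonoidAlgebra.single 0 c from by
    rw [single_eq_C_mul_T, T_zero, mul_one], AddMonoidAlgebra.coeff_single, Finsupp.single_apply, if_neg (by omega)]

lemma C_mul_apply (a : A) (f : LaurentPolynomial A) (k : ℤ) :
    (C a * f : LaurentPolynomial A).coeff k = a * f.coeff k := by
  rw [show (C a : LaurentPolynomial A) = AddMonoidAlgebra.single 0 a from by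
    rw [single_eq_C_mul_T, T_zero, mul_one], AddMonoidAlgebra.coeff_single_mul_apply, neg_zero, zero_add]

lemma nsmul_eq_C_mul (n : ℕ) (f : LaurentPolynomial A) :
    (n • f : LaurentPolynomial A) = C ((n : A)) * f := by
  rw [nsmul_eq_mul]
  congr 1

end StringEq

/-- necessity of the string equation. If the coefficient of `w¹` in `z`
and of `w⁻¹` in `z̄` are nonzero and the brackets `{H̄_{N+1}, z}`, `{H_{N+1}, z̄}`
respect the lower/upper degree bounds of the polynomial reduction, then `{z, z̄}`
has support in `{0}`, i.e. `{z, z̄}` is independent of `w`. -/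
theorem string_equation_necessary {A : Type*} [CommRing A] [IsDomain A] [Algebra ℚ A]
    (d : A → A)
    (hd_add : ∀ a b : A, d (a + b) = d a + d b)
    (hd_mul : ∀ a b : A, d (a * b) = a * d b + d a * b)
    (N : ℕ) (hN : 1 ≤ N)
    (z zbar : LaurentPolynomial A)
    (hz : z.coeff.support ⊆ Finset.Icc (-(N : ℤ)) 1)
    (hzbar : zbar.coeff.support ⊆ Finset.Icc (-1 : ℤ) (N : ℤ))
    (hz1 : z.coeff (1 : ℤ) ≠ 0)
    (hzbar1 : zbar.coeff (-1 : ℤ) ≠ 0)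
    (HN1 HbN1 : LaurentPolynomial A)
    (hHN1 : HN1 = posPart (z ^ (N + 1)) + C ((1/2 : ℚ) • ((z ^ (N + 1)).coeff (0 : ℤ))))
    (hHbN1 : HbN1 = negPart (zbar ^ (N + 1)) + C ((1/2 : ℚ) • ((zbar ^ (N + 1)).coeff (0 : ℤ))))
    (hlow : ∀ m ∈ (lax d HbN1 z).coeff.support, -(N : ℤ) ≤ m)
    (hhigh : ∀ m ∈ (lax d HN1 zbar).coeff.support, m ≤ (N : ℤ)) :
    (lax d z zbar).coeff.support ⊆ {0} := by
  classical
  have hd0 : d 0 = 0 := by have := hd_add 0 0; simpa using this.symm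
  haveI : CharZero A := charZero_of_injective_algebraMap (algebraMap ℚ A).injective
  intro m hm
  set B := lax d z zbar with hB
  have hne : B.coeff.support.Nonempty := ⟨m, hm⟩
  set m0 := B.coeff.support.min' hne with hm0def
  set m1 := B.coeff.support.max' hne with hm1def
  have hNA : ((N : A) + 1) ≠ 0 := by
    have : ((N + 1 : ℕ) : A) ≠ 0 := Nat.cast_ne_zero.mpr (Nat.succ_ne_zero N)
    push_cast at this
    exact this
  -- lower bound: 0 ≤ m0
  have low : (0 : ℤ) ≤ m0 := by
    by_contra hneg
    push_neg at hneg
    set g : LaurentPolynomial A := zbar ^ (N + 1) - HbN1 with hg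
    have hgsupp : ∀ k ∈ g.coeff.support, (0 : ℤ) ≤ k := by
      intro k hk
      by_contra hk0
      push_neg at hk0
      apply Finsupp.mem_support_iff.mp hk
      rw [hg, hHbN1, AddMonoidAlgebra.coeff_sub, Finsupp.sub_apply, AddMonoidAlgebra.coeff_add, Finsupp.add_apply, StringEq.negPart_apply,
        if_pos hk0, StringEq.C_apply' _ k (by omega)]
      ring
    have hsplit : lax d (zbar ^ (N + 1)) z = lax d HbN1 z + lax d g z := by
      rw [show zbar ^ (N + 1) = HbN1 + g by rw [hg]; ring]
      exact StringEq.lax_add_left d hd_add _ _ _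
    have hsupp1 : ∀ k ∈ (lax d (zbar ^ (N + 1)) z).coeff.support, -(N : ℤ) ≤ k := by
      intro k hk
      rw [hsplit, AddMonoidAlgebra.coeff_add] at hk
      rcases Finset.mem_union.mp (Finsupp.support_add hk) with h | h
      · exact hlow k h
      · rcases Finset.mem_add.mp (StringEq.lax_support d hd0 g z h) with ⟨i, hi, j, hj, hij⟩
        have h1 := hgsupp i hi
        have h2 := Finset.mem_Icc.mp (hz hj)
        omega
    have hpow : lax d (zbar ^ (N + 1)) z = (N + 1) • (zbar ^ N * lax d zbar z) :=
      StringEq.lax_pow d hd_add hd_mul zbar z N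
    have hzbarlow : ∀ t ∈ zbar.coeff.support, (-1 : ℤ) ≤ t :=
      fun t ht => (Finset.mem_Icc.mp (hzbar ht)).1
    have hzbarN : ∀ k ∈ (zbar ^ N : LaurentPolynomial A).coeff.support, -(N : ℤ) ≤ k := by
      intro k hk
      have := StringEq.pow_supp_low zbar (-1) hzbarlow N k hk
      rw [mul_neg_one] at this
      exact this
    have hanti : lax d zbar z = -B := by
      rw [hB]; exact StringEq.lax_antisymm d zbar z
    have hlaxlow : ∀ k ∈ (lax d zbar z).coeff.support, m0 ≤ k := by
      intro k hk
      rw [hanti, AddMonoidAlgebra.coeff_neg, Finsupp.support_neg] at hk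
      exact Finset.min'_le _ k hk
    have hco : (zbar ^ N * lax d zbar z : LaurentPolynomial A).coeff (-(N : ℤ) + m0)
        = (zbar ^ N : LaurentPolynomial A).coeff (-(N : ℤ)) * (lax d zbar z).coeff m0 :=
      StringEq.mul_apply_low _ _ _ _ hzbarN hlaxlow
    have hcoeff : (zbar ^ N : LaurentPolynomial A).coeff (-(N : ℤ)) = (zbar.coeff (-1 : ℤ)) ^ N := by
      have := StringEq.pow_coeff_low zbar (-1) hzbarlow N
      rw [mul_neg_one] at this
      exact this
    have hBm0 : B.coeff m0 ≠ 0 := Finsupp.mem_support_iff.mp (B.coeff.support.min'_mem hne)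
    have hlzm0 : (lax d zbar z).coeff m0 = -(B.coeff m0) := by
        rw [hanti, AddMonoidAlgebra.coeff_neg, Finsupp.neg_apply]
    have hval : (lax d (zbar ^ (N + 1)) z).coeff (-(N : ℤ) + m0) ≠ 0 := by
      rw [hpow, StringEq.nsmul_eq_C_mul, StringEq.C_mul_apply, hco, hcoeff, hlzm0]
      push_cast
      exact mul_ne_zero hNA (mul_ne_zero (pow_ne_zero _ hzbar1) (neg_ne_zero.mpr hBm0))
    have := hsupp1 _ (Finsupp.mem_support_iff.mpr hval)
    omega
  -- upper bound: m1 ≤ 0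
  have high : m1 ≤ (0 : ℤ) := by
    by_contra hpos
    push_neg at hpos
    set g : LaurentPolynomial A := z ^ (N + 1) - HN1 with hg
    have hgsupp : ∀ k ∈ g.coeff.support, k ≤ (0 : ℤ) := by
      intro k hk
      by_contra hk0
      push_neg at hk0
      apply Finsupp.mem_support_iff.mp hk
      rw [hg, hHN1, AddMonoidAlgebra.coeff_sub, Finsupp.sub_apply, AddMonoidAlgebra.coeff_add, Finsupp.add_apply, StringEq.posPart_apply,
        if_pos hk0, StringEq.C_apply' _ k (by omega)]
      ring
    have hsplit : lax d (z ^ (N + 1)) zbar = lax d HN1 zbar + lax d g zbar := by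
      rw [show z ^ (N + 1) = HN1 + g by rw [hg]; ring]
      exact StringEq.lax_add_left d hd_add _ _ _
    have hsupp1 : ∀ k ∈ (lax d (z ^ (N + 1)) zbar).coeff.support, k ≤ (N : ℤ) := by
      intro k hk
      rw [hsplit, AddMonoidAlgebra.coeff_add] at hk
      rcases Finset.mem_union.mp (Finsupp.support_add hk) with h | h
      · exact hhigh k h
      · rcases Finset.mem_add.mp (StringEq.lax_support d hd0 g zbar h) with ⟨i, hi, j, hj, hij⟩
        have h1 := hgsupp i hi
        have h2 := Finset.mem_Icc.mp (hzbar hj)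
        omega
    have hpow : lax d (z ^ (N + 1)) zbar = (N + 1) • (z ^ N * lax d z zbar) :=
      StringEq.lax_pow d hd_add hd_mul z zbar N
    have hzhigh : ∀ t ∈ z.coeff.support, t ≤ (1 : ℤ) :=
      fun t ht => (Finset.mem_Icc.mp (hz ht)).2
    have hzN : ∀ k ∈ (z ^ N : LaurentPolynomial A).coeff.support, k ≤ (N : ℤ) := by
      intro k hk
      have := StringEq.pow_supp_high z 1 hzhigh N k hk
      rw [mul_one] at this
      exact this
    have hlaxhigh : ∀ k ∈ (lax d z zbar).coeff.support, k ≤ m1 := by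
      intro k hk
      exact Finset.le_max' _ k hk
    have hco : (z ^ N * lax d z zbar : LaurentPolynomial A).coeff ((N : ℤ) + m1)
        = (z ^ N : LaurentPolynomial A).coeff (N : ℤ) * (lax d z zbar).coeff m1 :=
      StringEq.mul_apply_high _ _ _ _ hzN hlaxhigh
    have hcoeff : (z ^ N : LaurentPolynomial A).coeff (N : ℤ) = (z.coeff (1 : ℤ)) ^ N := by
      have := StringEq.pow_coeff_high z 1 hzhigh N
      rw [mul_one] at this
      exact this
    have hBm1 : B.coeff m1 ≠ 0 := Finsupp.mem_support_iff.mp (B.coeff.support.max'_mem hne)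
    have hval : (lax d (z ^ (N + 1)) zbar).coeff ((N : ℤ) + m1) ≠ 0 := by
      rw [hpow, StringEq.nsmul_eq_C_mul, StringEq.C_mul_apply, hco, hcoeff]
      push_cast
      exact mul_ne_zero hNA (mul_ne_zero (pow_ne_zero _ hz1) (hB ▸ hBm1))
    have := hsupp1 _ (Finsupp.mem_support_iff.mpr hval)
    omega
  have h1 : m0 ≤ m := Finset.min'_le _ m hm
  have h2 : m ≤ m1 := Finset.le_max' _ m hm
  exact Finset.mem_singleton.mpr (by omega)
end

section
/- Let K be a field of characteristic zero with a derivation d : K → K, extended coefficientwise to the polynomial ring K[w] (with d(w) = 0), and let ′ denote the formal derivative d/dw. Let p, q ∈ K[w] with p monic of degree N ≥ 1 and q of degree N+1, and fix k ≥ 1. Let s ∈ K[w] be the quotient in the Euclidean division of q^k by p^k (so q^k = s·p^k + ρ with deg ρ < kN), and set H := s − (1/2)·s₀, where s₀ is the constant coefficient of s. Then the polynomial P := w·H′·(d(q)·p − q·d(p)) − w·d(H)·(q′·p − q·p′) has degree at most 2N+1. (Equivalently, for z = q/p the bracket {H, z} equals P/p² with deg P ≤ 2N+1, so the t_k-flows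 of the 2dToda hierarchy preserve the rational form of z.) -/
open Polynomial

/-- The derivation `d : K → K` extended coefficientwise to `K[w]` (so `d w = 0`). -/
noncomputable def pmap {K : Type*} [CommRing K] (d : K → K) (f : Polynomial K) :
    Polynomial K :=
  f.sum fun n a => C (d a) * X ^ n

section helpers
variable {K : Type*} [CommRing K] {d : K → K}
  (hd_add : ∀ a b : K, d (a + b) = d a + d b)
  (hd_mul : ∀ a b : K, d (a * b) = a * d b + d a * b)

include hd_add in
lemma d_zero' : d 0 = 0 := by
  have := hd_add 0 0; simpa using this.symm

include hd_add in
lemma d_sub' (a b : K) : d (a - b) = d a - d b := by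
  have h := hd_add (a - b) b
  rw [sub_add_cancel] at h
  have : d (a - b) = d a - d b := by rw [h]; ring
  exact this

include hd_add in
lemma coeff_pmap (f : Polynomial K) (n : ℕ) : (pmap d f).coeff n = d (f.coeff n) := by
  rw [pmap, Polynomial.sum, finset_sum_coeff]
  simp only [coeff_C_mul, coeff_X_pow, mul_ite, mul_one, mul_zero]
  rw [Finset.sum_ite_eq f.support n (fun i => d (f.coeff i))]
  by_cases h : n ∈ f.support
  · simp [h]
  · simp [h, notMem_support_iff.mp h, d_zero' hd_add]

include hd_add in
lemma pmap_add (f g : Polynomial K) : pmap d (f + g) = pmap d f + pmap d g := by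
  ext n; simp [coeff_pmap hd_add, hd_add]

include hd_add in
lemma pmap_sub (f g : Polynomial K) : pmap d (f - g) = pmap d f - pmap d g := by
  ext n; simp [coeff_pmap hd_add, d_sub' hd_add]

include hd_add in
lemma pmap_C (a : K) : pmap d (C a : Polynomial K) = C (d a) := by
  ext n
  simp [coeff_pmap hd_add, coeff_C, apply_ite d, d_zero' hd_add]

include hd_add in
lemma d_sum {ι : Type*} (t : Finset ι) (F : ι → K) :
    d (∑ i ∈ t, F i) = ∑ i ∈ t, d (F i) := by
  classical
  induction t using Finset.cons_induction with
  | empty => simpa using d_zero' hd_add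
  | cons a t ha ih => rw [Finset.sum_cons, Finset.sum_cons, hd_add, ih]

include hd_add hd_mul in
lemma pmap_mul (f g : Polynomial K) :
    pmap d (f * g) = f * pmap d g + pmap d f * g := by
  ext n
  simp only [coeff_pmap hd_add, coeff_add, coeff_mul, d_sum hd_add,
    ← Finset.sum_add_distrib]
  exact Finset.sum_congr rfl fun x _ => hd_mul _ _

include hd_add hd_mul in
lemma pmap_one : pmap d (1 : Polynomial K) = 0 := by
  have h := pmap_mul hd_add hd_mul (1 : Polynomial K) 1
  simp at h
  ext n
  have := congrArg (fun f => coeff f n) h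
  simp at this
  simpa [coeff_pmap hd_add] using this

include hd_add hd_mul in
lemma pmap_pow (f : Polynomial K) (n : ℕ) :
    pmap d (f ^ n) = (n : Polynomial K) * f ^ (n - 1) * pmap d f := by
  induction n with
  | zero => simp [pmap_one hd_add hd_mul]
  | succ m ih =>
      rw [pow_succ, pmap_mul hd_add hd_mul, ih]
      cases m with
      | zero => simp
      | succ l =>
        simp only [Nat.succ_sub_one]
        push_cast
        ring

include hd_add in
lemma degree_pmap_le (f : Polynomial K) : (pmap d f).degree ≤ f.degree := by
  rw [degree_le_iff_coeff_zero]
  intro m hm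
  rw [coeff_pmap hd_add, coeff_eq_zero_of_degree_lt hm, d_zero' hd_add]

end helpers

/-- for the rational reduction `z = q/p` the bracket `{H_k, z} = P/p²`
has numerator of degree at most `2N+1`, i.e. the `t_k`-flows preserve the rational
form of `z`.  Here `s` is the quotient of the Euclidean division of `q^k` by the
monic polynomial `p^k` and `H = s − (1/2)s₀`. -/
theorem t_flow_preserves_rational_reduction {K : Type*} [Field K] [CharZero K]
    (d : K → K)
    (hd_add : ∀ a b : K, d (a + b) = d a + d b)
    (hd_mul : ∀ a b : K, d (a * b) = a * d b + d a * b)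
    (N k : ℕ) (hN : 1 ≤ N) (hk : 1 ≤ k)
    (p q : Polynomial K) (hp : p.Monic) (hpd : p.natDegree = N) (hqd : q.natDegree = N + 1)
    (s : Polynomial K) (hs : s = (q ^ k) /ₘ (p ^ k))
    (H : Polynomial K) (hH : H = s - C (s.coeff 0 / 2))
    (P : Polynomial K)
    (hP : P = X * (derivative H) * (pmap d q * p - q * pmap d p)
        - X * pmap d H * (derivative q * p - q * derivative p)) :
    P.degree ≤ (2 * N + 1 : ℕ) := by
  obtain ⟨m, rfl⟩ : ∃ m, k = m + 1 := ⟨k - 1, (Nat.succ_pred_eq_of_pos hk).symm⟩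
  have hq0 : q ≠ 0 := fun h => by simp [h] at hqd
  have hpk : (p ^ (m + 1)).Monic := hp.pow _
  set r : Polynomial K := q ^ (m + 1) %ₘ p ^ (m + 1) with hrdef
  have heq : q ^ (m + 1) = s * p ^ (m + 1) + r := by
    have h := modByMonic_add_div (q ^ (m + 1)) (p ^ (m + 1))
    rw [hs]; linear_combination -h
  -- the two differentiated versions of heq
  have h1 : ((m + 1 : ℕ) : Polynomial K) * q ^ m * derivative q
      = derivative s * p ^ (m + 1)
        + s * (((m + 1 : ℕ) : Polynomial K) * p ^ m * derivative p)
        + derivative r := by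
    have h := congrArg derivative heq
    simp only [derivative_add, derivative_mul, derivative_pow, Nat.add_sub_cancel,
      C_eq_natCast] at h
    linear_combination h
  have h2 : ((m + 1 : ℕ) : Polynomial K) * q ^ m * pmap d q
      = pmap d s * p ^ (m + 1)
        + s * (((m + 1 : ℕ) : Polynomial K) * p ^ m * pmap d p)
        + pmap d r := by
    have h := congrArg (pmap d) heq
    rw [pmap_pow hd_add hd_mul, pmap_add hd_add, pmap_mul hd_add hd_mul,
      pmap_pow hd_add hd_mul] at h
    simp only [Nat.add_sub_cancel] at h
    linear_combination h
  -- key polynomial identity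
  have key : (derivative s * (pmap d q * p - q * pmap d p)
        - pmap d s * (derivative q * p - q * derivative p)) * p ^ (m + 1)
      = ((m + 1 : ℕ) : Polynomial K) * r
            * (pmap d q * derivative p - derivative q * pmap d p)
        - derivative r * (pmap d q * p - q * pmap d p)
        + pmap d r * (derivative q * p - q * derivative p) := by
    linear_combination
      (-(pmap d q * p - q * pmap d p)) * h1
      + (derivative q * p - q * derivative p) * h2
      + ((m + 1 : ℕ) : Polynomial K)
          * (pmap d q * derivative p - derivative q * pmap d p) * heq
  -- degree bookkeeping
  set M : ℕ := (m + 1) * N with hM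
  have hM1 : 1 ≤ M := by
    have := Nat.mul_le_mul (Nat.le_add_left 1 m) hN
    simpa [hM] using this
  have hdegq : q.degree ≤ ((N + 1 : ℕ) : WithBot ℕ) := by
    rw [← hqd]; exact degree_le_natDegree
  have hdegp : p.degree ≤ ((N : ℕ) : WithBot ℕ) := by
    rw [← hpd]; exact degree_le_natDegree
  have hdegq' : (derivative q).degree ≤ ((N : ℕ) : WithBot ℕ) :=
    degree_le_natDegree.trans
      (Nat.cast_le.mpr (le_trans (natDegree_derivative_le q) (by omega)))
  have hdegp' : (derivative p).degree ≤ ((N - 1 : ℕ) : WithBot ℕ) :=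
    degree_le_natDegree.trans
      (Nat.cast_le.mpr (le_trans (natDegree_derivative_le p) (by omega)))
  have hdegdq : (pmap d q).degree ≤ ((N + 1 : ℕ) : WithBot ℕ) :=
    (degree_pmap_le hd_add q).trans hdegq
  have hdegdp : (pmap d p).degree ≤ ((N : ℕ) : WithBot ℕ) :=
    (degree_pmap_le hd_add p).trans hdegp
  -- degree of r
  have hdegr : r.degree ≤ ((M - 1 : ℕ) : WithBot ℕ) := by
    have hlt : r.degree < ((M : ℕ) : WithBot ℕ) := by
      have := degree_modByMonic_lt (q ^ (m + 1)) hpk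
      have hdpk : (p ^ (m + 1)).degree = ((M : ℕ) : WithBot ℕ) := by
        rw [degree_eq_natDegree hpk.ne_zero, hp.natDegree_pow, hpd]
      rwa [hdpk] at this
    by_cases hr0 : r = 0
    · simp [hr0]
    · have : r.natDegree < M := (natDegree_lt_iff_degree_lt hr0).mpr hlt
      exact degree_le_natDegree.trans (Nat.cast_le.mpr (by omega))
  have hdegr' : (derivative r).degree ≤ ((M - 1 : ℕ) : WithBot ℕ) :=
    degree_le_natDegree.trans (Nat.cast_le.mpr (le_trans (natDegree_derivative_le r)
      (by
        have : r.natDegree ≤ M - 1 := by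
          by_cases hr0 : r = 0
          · simp [hr0]
          · have hlt : r.degree < ((M : ℕ) : WithBot ℕ) := by
              have := degree_modByMonic_lt (q ^ (m + 1)) hpk
              have hdpk : (p ^ (m + 1)).degree = ((M : ℕ) : WithBot ℕ) := by
                rw [degree_eq_natDegree hpk.ne_zero, hp.natDegree_pow, hpd]
              rwa [hdpk] at this
            have := (natDegree_lt_iff_degree_lt hr0).mpr hlt
            omega
        omega)))
  have hdegdr : (pmap d r).degree ≤ ((M - 1 : ℕ) : WithBot ℕ) :=
    (degree_pmap_le hd_add r).trans hdegr
  -- degrees of the bracket building blocks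
  have hX1 : (pmap d q * p - q * pmap d p).degree ≤ ((2 * N + 1 : ℕ) : WithBot ℕ) := by
    have h1' := degree_mul_le_of_le hdegdq hdegp
    have h2' := degree_mul_le_of_le hdegq hdegdp
    refine (degree_sub_le_of_le h1' h2').trans ?_
    simp only [← Nat.cast_add, sup_le_iff]
    constructor <;> exact Nat.cast_le.mpr (by omega)
  have hX2 : (derivative q * p - q * derivative p).degree ≤ ((2 * N : ℕ) : WithBot ℕ) := by
    have h1' := degree_mul_le_of_le hdegq' hdegp
    have h2' := degree_mul_le_of_le hdegq hdegp'
    refine (degree_sub_le_of_le h1' h2').trans ?_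
    simp only [← Nat.cast_add, sup_le_iff]
    constructor <;> exact Nat.cast_le.mpr (by omega)
  have hZ : (pmap d q * derivative p - derivative q * pmap d p).degree
      ≤ ((2 * N : ℕ) : WithBot ℕ) := by
    have h1' := degree_mul_le_of_le hdegdq hdegp'
    have h2' := degree_mul_le_of_le hdegq' hdegdp
    refine (degree_sub_le_of_le h1' h2').trans ?_
    simp only [← Nat.cast_add, sup_le_iff]
    constructor <;> exact Nat.cast_le.mpr (by omega)
  -- bound the degree of A via the key identity
  have hRHS : (((m + 1 : ℕ) : Polynomial K) * r
            * (pmap d q * derivative p - derivative q * pmap d p)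
        - derivative r * (pmap d q * p - q * pmap d p)
        + pmap d r * (derivative q * p - q * derivative p)).degree
      ≤ ((M + 2 * N : ℕ) : WithBot ℕ) := by
    have t1 : (((m + 1 : ℕ) : Polynomial K) * r
          * (pmap d q * derivative p - derivative q * pmap d p)).degree
        ≤ ((M + 2 * N : ℕ) : WithBot ℕ) := by
      have := degree_mul_le_of_le (degree_mul_le_of_le (degree_natCast_le (m + 1)) hdegr) hZ
      refine this.trans ?_
      rw [zero_add, ← Nat.cast_add]
      exact Nat.cast_le.mpr (by omega)
    have t2 : (derivative r * (pmap d q * p - q * pmap d p)).degree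
        ≤ ((M + 2 * N : ℕ) : WithBot ℕ) := by
      have := degree_mul_le_of_le hdegr' hX1
      refine this.trans ?_
      rw [← Nat.cast_add]
      exact Nat.cast_le.mpr (by omega)
    have t3 : (pmap d r * (derivative q * p - q * derivative p)).degree
        ≤ ((M + 2 * N : ℕ) : WithBot ℕ) := by
      have := degree_mul_le_of_le hdegdr hX2
      refine this.trans ?_
      rw [← Nat.cast_add]
      exact Nat.cast_le.mpr (by omega)
    refine (degree_add_le_of_le (degree_sub_le_of_le t1 t2) t3).trans ?_
    simp
  have hA : (derivative s * (pmap d q * p - q * pmap d p)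
        - pmap d s * (derivative q * p - q * derivative p)).degree
      ≤ ((2 * N : ℕ) : WithBot ℕ) := by
    have hmul := hpk.degree_mul (p := derivative s * (pmap d q * p - q * pmap d p)
        - pmap d s * (derivative q * p - q * derivative p))
    have hdpk : (p ^ (m + 1)).degree = ((M : ℕ) : WithBot ℕ) := by
      rw [degree_eq_natDegree hpk.ne_zero, hp.natDegree_pow, hpd]
    rw [key, hdpk] at hmul
    have : (derivative s * (pmap d q * p - q * pmap d p)
        - pmap d s * (derivative q * p - q * derivative p)).degree
          + ((M : ℕ) : WithBot ℕ)
        ≤ ((2 * N : ℕ) : WithBot ℕ) + ((M : ℕ) : WithBot ℕ) := by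
      rw [← hmul]
      refine hRHS.trans ?_
      rw [← Nat.cast_add]
      exact Nat.cast_le.mpr (by omega)
    exact (WithBot.add_le_add_iff_right (by exact_mod_cast WithBot.coe_ne_bot)).mp this
  -- rewrite P
  have hd_half : ∀ a : K, d (a / 2) = d a / 2 := by
    intro a
    have h := hd_add (a / 2) (a / 2)
    rw [add_halves] at h
    field_simp
    linear_combination -h
  have hPeq : P = X * (derivative s * (pmap d q * p - q * pmap d p)
        - pmap d s * (derivative q * p - q * derivative p))
      + X * C (d (s.coeff 0) / 2) * (derivative q * p - q * derivative p) := by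
    rw [hP, hH, derivative_sub, derivative_C, pmap_sub hd_add, pmap_C hd_add,
      hd_half]
    ring
  rw [hPeq]
  have b1 : (X * (derivative s * (pmap d q * p - q * pmap d p)
        - pmap d s * (derivative q * p - q * derivative p))).degree
      ≤ ((2 * N + 1 : ℕ) : WithBot ℕ) := by
    have := degree_mul_le_of_le degree_X_le hA
    refine this.trans ?_
    rw [show ((2 * N + 1 : ℕ) : WithBot ℕ) = 1 + ((2 * N : ℕ) : WithBot ℕ) by
      rw [Nat.cast_add, Nat.cast_one, add_comm]]
  have b2 : (X * C (d (s.coeff 0) / 2) * (derivative q * p - q * derivative p)).degree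
      ≤ ((2 * N + 1 : ℕ) : WithBot ℕ) := by
    refine (degree_mul_le_of_le (degree_mul_le_of_le degree_X_le
      (degree_C_le (a := d (s.coeff 0) / 2))) hX2).trans ?_
    rw [show ((1 : WithBot ℕ) + 0 + ((2 * N : ℕ) : WithBot ℕ)) = ((2 * N + 1 : ℕ) : WithBot ℕ) by
      rw [add_zero, Nat.cast_add, Nat.cast_one, add_comm]]
  exact (degree_add_le_of_le b1 b2).trans (by simp)
end

section
/- Let K be a field of characteristic zero with a derivation d : K → K, extended to the field K(w) of rational functions (with d(w) = 0), and let ∂_w denote the derivative with respect to w. Let p, q ∈ K[w] with p monic of degree N ≥ 1, deg q = N+1, and p(0) ≠ 0; set z := q/p. Let B, C ∈ K[w] with deg B ≤ N+1, deg C ≤ N and C(0) = 1, set r := B(0) and Z̄ := B/(w·C) ∈ K(w) (this represents z̄(1/w) for the rational reduction of z̄). Assume the string equation holds: w·(∂_w z)·(d Z̄) − w·(d z)·(∂_w Z̄) = 1 in K(w). Define H̄₁ := r·w⁻¹ + (1/2)·(B₁ − r·C₁) ∈ K(w), where B₁, C₁ are the coefficients of w¹ in B and C (so H̄₁ = (z̄)₋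 + (1/2)(z̄)₀ for the Laurent expansion of Z̄ at w = 0). Then there exists Q ∈ K[w] with deg Q ≤ 2N+1 such that w·(∂_w H̄₁)·(d z) − w·(d H̄₁)·(∂_w z) = Q/p² in K(w); i.e., given the string equation, the first t̄-flow of the 2dToda hierarchy preserves the rational form of z. -/
open Polynomial

lemma pmap_degree_le {K : Type*} [CommRing K] (d : K → K) (f : Polynomial K) :
    (pmap d f).degree ≤ f.degree := by
  unfold pmap
  refine (degree_sum_le _ _).trans ?_
  apply Finset.sup_le
  intro n hn
  exact (degree_C_mul_X_pow_le _ _).trans (le_degree_of_ne_zero (mem_support_iff.mp hn))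

/-- given the string equation, the first `t̄`-flow of the 2dToda
hierarchy preserves the rational form of `z = q/p`.  Here `Z̄ = B/(w·C)` represents
`z̄(1/w)`, the derivatives `∂_w` and `d` of `z` and `Z̄` are given by the quotient
rule, `H̄₁ = r·w⁻¹ + (1/2)(B₁ − r·C₁)` with `r = B(0)`, and the conclusion exhibits
`{H̄₁, z} = Q/p²` with `deg Q ≤ 2N+1`. -/
theorem tbar_flow_preserves_rational_reduction {K : Type*} [Field K] [CharZero K]
    (d : K → K)
    (hd_add : ∀ a b : K, d (a + b) = d a + d b)
    (hd_mul : ∀ a b : K, d (a * b) = a * d b + d a * b)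
    (N : ℕ) (hN : 1 ≤ N)
    (p q B Cp : Polynomial K)
    (hp : p.Monic) (hpd : p.natDegree = N) (hqd : q.natDegree = N + 1)
    (hp0 : p.eval 0 ≠ 0)
    (hB : B.degree ≤ (N + 1 : ℕ)) (hCdeg : Cp.degree ≤ (N : ℕ)) (hC0 : Cp.coeff 0 = 1)
    (r : K) (hr : r = B.coeff 0)
    -- the `w`- and `x`-derivatives of `z = q/p` and of `Z̄ = B/(w·C)` in `K(w)`:
    (Zw Zd Zbw Zbd : RatFunc K)
    (hZw : Zw = algebraMap (Polynomial K) (RatFunc K) (derivative q * p - q * derivative p)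
        / algebraMap (Polynomial K) (RatFunc K) (p ^ 2))
    (hZd : Zd = algebraMap (Polynomial K) (RatFunc K) (pmap d q * p - q * pmap d p)
        / algebraMap (Polynomial K) (RatFunc K) (p ^ 2))
    (hZbw : Zbw = algebraMap (Polynomial K) (RatFunc K)
          (derivative B * (X * Cp) - B * derivative (X * Cp))
        / algebraMap (Polynomial K) (RatFunc K) ((X * Cp) ^ 2))
    (hZbd : Zbd = algebraMap (Polynomial K) (RatFunc K)
          (pmap d B * (X * Cp) - B * (X * pmap d Cp))
        / algebraMap (Polynomial K) (RatFunc K) ((X * Cp) ^ 2))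
    -- the string equation `w·(∂_w z)·(d Z̄) − w·(d z)·(∂_w Z̄) = 1`:
    (hstring : RatFunc.X * Zw * Zbd - RatFunc.X * Zd * Zbw = 1)
    -- the `w`- and `x`-derivatives of `H̄₁ = r·w⁻¹ + (1/2)(B₁ − r·C₁)`:
    (Hbw Hbd : RatFunc K)
    (hHbw : Hbw = - algebraMap (Polynomial K) (RatFunc K) (C r) / RatFunc.X ^ 2)
    (hHbd : Hbd = algebraMap (Polynomial K) (RatFunc K) (C (d r)) / RatFunc.X
        + algebraMap (Polynomial K) (RatFunc K)
            (C ((d (B.coeff 1) - (d r * Cp.coeff 1 + r * d (Cp.coeff 1))) / 2))) :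
    ∃ Q : Polynomial K, Q.degree ≤ (2 * N + 1 : ℕ) ∧
      RatFunc.X * Hbw * Zd - RatFunc.X * Hbd * Zw
        = algebraMap (Polynomial K) (RatFunc K) Q
          / algebraMap (Polynomial K) (RatFunc K) (p ^ 2) := by
  set φ := algebraMap (Polynomial K) (RatFunc K) with hφ
  set A := derivative q * p - q * derivative p with hA
  set Ad := pmap d q * p - q * pmap d p with hAd
  set Ab := derivative B * (X * Cp) - B * derivative (X * Cp) with hAb
  set Adb := pmap d B * (X * Cp) - B * (X * pmap d Cp) with hAdb
  have hpne : p ≠ 0 := hp.ne_zero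
  have hCne : Cp ≠ 0 := fun h => by simp [h] at hC0
  have hp2 : φ (p ^ 2) ≠ 0 := RatFunc.algebraMap_ne_zero (pow_ne_zero _ hpne)
  have hXC2 : φ ((X * Cp) ^ 2) ≠ 0 :=
    RatFunc.algebraMap_ne_zero (pow_ne_zero _ (mul_ne_zero X_ne_zero hCne))
  have hx : (RatFunc.X : RatFunc K) = φ X := (RatFunc.algebraMap_X ).symm
  have hXne : φ X ≠ 0 := RatFunc.algebraMap_ne_zero X_ne_zero
  have hpne' : φ p ≠ 0 := RatFunc.algebraMap_ne_zero hpne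
  have hCne' : φ Cp ≠ 0 := RatFunc.algebraMap_ne_zero hCne
  -- polynomial form of the string equation
  have E : X * (A * Adb) - X * (Ad * Ab) = p ^ 2 * (X * Cp) ^ 2 := by
    apply RatFunc.algebraMap_injective K
    rw [hZw, hZd, hZbw, hZbd, hx] at hstring
    simp only [map_sub, map_mul, map_pow]
    field_simp at hstring
    simp only [map_mul, map_pow] at hstring
    linear_combination hstring
  -- coefficient 1 of E gives r * Ad.coeff 0 = 0
  have h0 : r * Ad.coeff 0 = 0 := by
    have hE1 := congrArg (fun f : Polynomial K => f.coeff 1) E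
    simp only [coeff_sub] at hE1
    rw [show (1:ℕ) = 0 + 1 from rfl, coeff_X_mul, coeff_X_mul, mul_coeff_zero, mul_coeff_zero]
      at hE1
    have hAdb0 : Adb.coeff 0 = 0 := by
      simp [hAdb, mul_coeff_zero]
    have hAb0 : Ab.coeff 0 = -r := by
      simp [hAb, mul_coeff_zero, coeff_derivative, hC0, hr]
    have hR : (p ^ 2 * (X * Cp) ^ 2).coeff (0 + 1) = 0 := by
      have : p ^ 2 * (X * Cp) ^ 2 = X * (X * (p ^ 2 * Cp ^ 2)) := by ring
      rw [this, coeff_X_mul, mul_coeff_zero]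
      simp
    rw [hAdb0, hAb0, hR] at hE1
    linear_combination hE1
  -- extract S with C r * Ad = X * S
  obtain ⟨S, hS⟩ : X ∣ C r * Ad := X_dvd_iff.mpr (by rw [mul_coeff_zero, coeff_C_zero]; exact h0)
  set c : K := (d (B.coeff 1) - (d r * Cp.coeff 1 + r * d (Cp.coeff 1))) / 2 with hc
  refine ⟨-S - (C (d r) + C c * X) * A, ?_, ?_⟩
  · -- degree bound
    have hpm : (pmap d q).natDegree ≤ N + 1 :=
      hqd ▸ natDegree_le_natDegree (pmap_degree_le d q)
    have hpm2 : (pmap d p).natDegree ≤ N :=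
      hpd ▸ natDegree_le_natDegree (pmap_degree_le d p)
    have hAdeg : A.natDegree ≤ 2 * N := by
      refine (natDegree_sub_le _ _).trans (max_le ?_ ?_)
      · refine (natDegree_mul_le).trans ?_
        have h1 : (derivative q).natDegree ≤ N := by
          have := natDegree_derivative_le q; omega
        omega
      · refine (natDegree_mul_le).trans ?_
        have h1 : (derivative p).natDegree ≤ N - 1 := by
          have := natDegree_derivative_le p; omega
        omega
    have hAddeg : Ad.natDegree ≤ 2 * N + 1 := by
      refine (natDegree_sub_le _ _).trans (max_le ?_ ?_) <;>
        refine (natDegree_mul_le).trans ?_ <;> omega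
    have hSdeg : S.natDegree ≤ 2 * N := by
      rcases eq_or_ne S 0 with h | h
      · simp [h]
      · have hxs : (X * S).natDegree = 1 + S.natDegree := by
          rw [natDegree_mul X_ne_zero h, natDegree_X]
        have h2 : (C r * Ad).natDegree ≤ 2 * N + 1 :=
          (natDegree_C_mul_le r Ad).trans hAddeg
        rw [hS, hxs] at h2
        omega
    have hQ : (-S - (C (d r) + C c * X) * A).natDegree ≤ 2 * N + 1 := by
      refine (natDegree_sub_le _ _).trans (max_le ?_ ?_)
      · simpa using hSdeg.trans (by omega)
      · refine (natDegree_mul_le).trans ?_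
        have h1 : (C (d r) + C c * X).natDegree ≤ 1 := by
          refine (natDegree_add_le _ _).trans (max_le ?_ ?_)
          · simp
          · exact (natDegree_mul_le).trans (by simp)
        omega
    exact degree_le_natDegree.trans (Nat.cast_le.mpr hQ)
  · -- the identity
    have hSφ : φ (C r) * φ Ad = φ X * φ S := by
      rw [← map_mul, ← map_mul, hS]
    rw [hHbw, hHbd, hZd, hZw, hx]
    simp only [map_sub, map_add, map_mul, map_neg, map_pow]
    field_simp
    linear_combination (-1 : RatFunc K) * hSφ
end

section
/- Fix i ∈ {1,…,n+1} and define Ḡ^i_w(x,w) := 1/(w²·(w̄_i − 1/w)) and Ḡ^i_x(x,w) := w̄_i′/(w̄_i − 1/w) + (1/2)(r′/r − w̄_i′/w̄_i) (the w- and x-derivatives of the evolution function 𝓗̄_i = log(w̄_i − 1/w) + (1/2)log(r/w̄_i)). If the string equation holds, then there exist functions α, β, γ₁,…,γ_{n+1} : ℝ → ℂ such that for every x and every w ∈ ℂ outside {0} ∪ {w_j(x)} ∪ {1/w̄_j(x)}: w·Ḡ^i_w·Z_x − w·Ḡ^i_x·Z_w = α(x)·w + β(x) + Σ_{j=1}^{n+1}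 γ_j(x)/(w_j(x) − w). In particular the bracket {𝓗̄_i, z} has no pole at w = 1/w̄_i(x), so the τ̄_i-flow is tangent to the manifold of logarithmic reductions. -/
open Finset Filter Topology

private theorem taubar_aux_perj (A dj vj b db c w : ℂ) (hw : w ≠ 0) (hb : b ≠ 0)
    (h2 : vj - w ≠ 0) (h3 : w - vj ≠ 0) (h4 : b * vj - 1 ≠ 0) (hbw : b * w - 1 ≠ 0) :
    w * (1 / (w * (b * w - 1))) * (A * (db + b ^ 2 * dj) / (b * (1 - b * vj)))
      + w * (1 / (w * (b * w - 1))) * (A * dj / (vj - w))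
      - w * (db * w / (b * w - 1) + c) * (A / (w - vj))
    = (A * (dj + db * vj ^ 2) / (b * vj - 1) + c * A * vj) / (vj - w) - (c + db / b) * A := by
  have s : w * (1 / (w * (b * w - 1))) = 1 / (b * w - 1) := by
    rw [mul_one_div, div_eq_div_iff (mul_ne_zero hw hbw) hbw]; ring
  have d1 : A * (db + b ^ 2 * dj) / (b * (1 - b * vj))
      = -(A * (db + b ^ 2 * dj) / (b * (b * vj - 1))) := by
    rw [← neg_div, div_eq_div_iff
      (by intro h; rcases mul_eq_zero.mp h with h' | h'
          · exact hb h'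
          · exact h4 (by linear_combination -h'))
      (mul_ne_zero hb h4)]
    ring
  have q2 : (1 / (b * w - 1)) * (A * dj / (vj - w))
      = -(A * dj) * (1 / ((b * w - 1) * (w - vj))) := by
    rw [div_mul_div_comm, mul_one_div, div_eq_div_iff (mul_ne_zero hbw h2) (mul_ne_zero hbw h3)]
    ring
  have d3 : (A * (dj + db * vj ^ 2) / (b * vj - 1) + c * A * vj) / (vj - w)
      = -((A * (dj + db * vj ^ 2) / (b * vj - 1) + c * A * vj) / (w - vj)) := by
    rw [← neg_div, div_eq_div_iff h2 h3]; ring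
  rw [s, d1, q2, d3]
  field_simp
  ring

private theorem taubar_aux_scal (R R' b db c w : ℂ) (hw : w ≠ 0) (hb : b ≠ 0)
    (hbw : b * w - 1 ≠ 0) :
    w * (1 / (w * (b * w - 1))) * (R' * w + (db * R / b ^ 2 - R' / b))
      - w * (db * w / (b * w - 1) + c) * R
    = (-(db * R / b) - c * R) * w + (R' / b - db * R / b ^ 2) := by
  have s : w * (1 / (w * (b * w - 1))) = 1 / (b * w - 1) := by
    rw [mul_one_div, div_eq_div_iff (mul_ne_zero hw hbw) hbw]; ring
  rw [s]
  field_simp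
  ring

private theorem taubar_aux_ej (A dj vj b db : ℂ) (hb : b ≠ 0) (h4 : b * vj - 1 ≠ 0)
    (h1 : b⁻¹ - vj ≠ 0) (h1' : vj - b⁻¹ ≠ 0) :
    db * b⁻¹ ^ 2 * (A / (b⁻¹ - vj)) - A * dj / (vj - b⁻¹)
      = A * (db + b ^ 2 * dj) / (b * (1 - b * vj)) := by
  have h6 : (1 : ℂ) - b * vj ≠ 0 := fun h => h4 (by linear_combination -h)
  have h4' : vj * b - 1 ≠ 0 := fun h => h4 (by linear_combination h)
  field_simp
  ring

set_option maxHeartbeats 1000000 in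
/-- for the logarithmic reduction of the 2dToda hierarchy, if the string
equation holds then the bracket `{𝓗̄_i, z} = w·Ḡ^i_w·Z_x − w·Ḡ^i_x·Z_w` has the
partial-fraction form `α(x)·w + β(x) + Σ_j γ_j(x)/(w_j(x) − w)`; in particular it has
no pole at `w = 1/w̄_i(x)`, so the `τ̄_i`-flow is tangent to the manifold of
logarithmic reductions. -/
theorem taubar_flow_tangent_to_log_reduction
    (n : ℕ) (a abar : ℕ → ℂ)
    (r u ubar : ℝ → ℂ) (W Wb : ℕ → ℝ → ℂ)
    (r' u' ubar' : ℝ → ℂ) (W' Wb' : ℕ → ℝ → ℂ)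
    (ha : ∀ i ∈ Finset.Icc 1 (n + 1), a i ≠ 0)
    (habar : ∀ i ∈ Finset.Icc 1 (n + 1), abar i ≠ 0)
    (hasum : ∑ i ∈ Finset.Icc 1 (n + 1), a i = 0)
    (habarsum : ∑ i ∈ Finset.Icc 1 (n + 1), abar i = 0)
    (hr0 : ∀ x, r x ≠ 0)
    (hW0 : ∀ i ∈ Finset.Icc 1 (n + 1), ∀ x : ℝ, W i x ≠ 0)
    (hWb0 : ∀ i ∈ Finset.Icc 1 (n + 1), ∀ x : ℝ, Wb i x ≠ 0)
    (hWdist : ∀ i ∈ Finset.Icc 1 (n + 1), ∀ j ∈ Finset.Icc 1 (n + 1), i ≠ j →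
      ∀ x : ℝ, W i x ≠ W j x)
    (hWbdist : ∀ i ∈ Finset.Icc 1 (n + 1), ∀ j ∈ Finset.Icc 1 (n + 1), i ≠ j →
      ∀ x : ℝ, Wb i x ≠ Wb j x)
    (hWWb : ∀ i ∈ Finset.Icc 1 (n + 1), ∀ j ∈ Finset.Icc 1 (n + 1),
      ∀ x : ℝ, W i x * Wb j x ≠ 1)
    (hdr : ∀ x, HasDerivAt r (r' x) x)
    (hdu : ∀ x, HasDerivAt u (u' x) x)
    (hdubar : ∀ x, HasDerivAt ubar (ubar' x) x)
    (hdW : ∀ i ∈ Finset.Icc 1 (n + 1), ∀ x, HasDerivAt (W i) (W' i x) x)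
    (hdWb : ∀ i ∈ Finset.Icc 1 (n + 1), ∀ x, HasDerivAt (Wb i) (Wb' i x) x)
    -- the rational (in w) partial derivatives of z and z̄
    (Zw Zx Zbw Zbx : ℝ → ℂ → ℂ)
    (hZw : ∀ x w, Zw x w = r x + ∑ i ∈ Finset.Icc 1 (n + 1), a i / (w - W i x))
    (hZx : ∀ x w, Zx x w =
      r' x * w + u' x + ∑ i ∈ Finset.Icc 1 (n + 1), a i * W' i x / (W i x - w))
    (hZbw : ∀ x w, Zbw x w =
      - r x / w ^ 2 + ∑ i ∈ Finset.Icc 1 (n + 1), abar i / (w ^ 2 * (Wb i x - 1 / w)))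
    (hZbx : ∀ x w, Zbx x w =
      r' x / w + ubar' x + ∑ i ∈ Finset.Icc 1 (n + 1), abar i * Wb' i x / (Wb i x - 1 / w))
    -- the string equation
    (hstring : ∀ (x : ℝ) (w : ℂ), w ≠ 0 → (∀ j ∈ Finset.Icc 1 (n + 1), w ≠ W j x) →
      (∀ j ∈ Finset.Icc 1 (n + 1), w ≠ (Wb j x)⁻¹) →
      w * Zw x w * Zbx x w - w * Zx x w * Zbw x w = 1)
    -- the fixed index i and the derivatives Ḡ^i of the evolution function 𝓗̄_i
    (i : ℕ) (hi : i ∈ Finset.Icc 1 (n + 1))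
    (Gbw Gbx : ℝ → ℂ → ℂ)
    (hGbw : ∀ x w, Gbw x w = 1 / (w ^ 2 * (Wb i x - 1 / w)))
    (hGbx : ∀ x w, Gbx x w =
      Wb' i x / (Wb i x - 1 / w) + (1 / 2) * (r' x / r x - Wb' i x / Wb i x)) :
    ∃ α β : ℝ → ℂ, ∃ γ : ℕ → ℝ → ℂ, ∀ (x : ℝ) (w : ℂ), w ≠ 0 →
      (∀ j ∈ Finset.Icc 1 (n + 1), w ≠ W j x) →
      (∀ j ∈ Finset.Icc 1 (n + 1), w ≠ (Wb j x)⁻¹) →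
      w * Gbw x w * Zx x w - w * Gbx x w * Zw x w
        = α x * w + β x + ∑ j ∈ Finset.Icc 1 (n + 1), γ j x / (W j x - w) := by
  classical
  refine ⟨fun x => -(Wb' i x * r x / Wb i x)
      - (1/2) * (r' x / r x - Wb' i x / Wb i x) * r x,
    fun x => r' x / Wb i x - Wb' i x * r x / (Wb i x) ^ 2,
    fun j x => a j * (W' j x + Wb' i x * (W j x) ^ 2) / (Wb i x * W j x - 1)
      + (1/2) * (r' x / r x - Wb' i x / Wb i x) * a j * W j x,
    fun x w hw hwW hwWb => ?_⟩
  have hR : r x ≠ 0 := hr0 x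
  have hb0 : Wb i x ≠ 0 := hWb0 i hi x
  set F : Finset ℕ := Finset.Icc 1 (n + 1) with hF
  set w₀ : ℂ := (Wb i x)⁻¹ with hw₀def
  have hw₀ : w₀ ≠ 0 := inv_ne_zero hb0
  have hw₀W : ∀ j ∈ F, w₀ ≠ W j x := by
    intro j hj h
    exact hWWb j hj i hi x (by rw [← h, hw₀def, inv_mul_cancel₀ hb0])
  have hw₀v : ∀ j ∈ F, w₀ - W j x ≠ 0 := fun j hj => sub_ne_zero.mpr (hw₀W j hj)
  have hw₀vb : ∀ j ∈ F.erase i, Wb j x - 1 / w₀ ≠ 0 := by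
    intro j hj
    have hji : j ≠ i := (Finset.mem_erase.mp hj).1
    have h1 : (1 : ℂ) / w₀ = Wb i x := by rw [hw₀def, one_div, inv_inv]
    rw [h1]
    exact sub_ne_zero.mpr (hWbdist j (Finset.mem_of_mem_erase hj) i hi hji x)
  -- the auxiliary function g
  set g : ℂ → ℂ := fun v =>
    v * (r x + ∑ j ∈ F, a j / (v - W j x)) *
      ((Wb i x * v - 1) * (r' x / v + ubar' x +
          ∑ j ∈ F.erase i, abar j * Wb' j x / (Wb j x - 1 / v))
        + abar i * Wb' i x * v)
    - v * (r' x * v + u' x + ∑ j ∈ F, a j * W' j x / (W j x - v)) *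
      ((Wb i x * v - 1) * (- r x / v ^ 2 +
          ∑ j ∈ F.erase i, abar j / (v ^ 2 * (Wb j x - 1 / v)))
        + abar i / v)
    - (Wb i x * v - 1) with hgdef
  -- g vanishes on the admissible set, by the string equation
  have hg0 : ∀ v : ℂ, v ≠ 0 → (∀ j ∈ F, v ≠ W j x) → (∀ j ∈ F, v ≠ (Wb j x)⁻¹) →
      g v = 0 := by
    intro v hv hvW hvWb
    have hbv : Wb i x * v - 1 ≠ 0 := by
      intro h
      exact hvWb i hi (eq_inv_of_mul_eq_one_left (by linear_combination h))
    have hb1v : Wb i x - 1 / v ≠ 0 := by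
      intro h; apply hbv
      have h' : Wb i x = 1 / v := by linear_combination h
      rw [h']; field_simp; ring
    have hs := hstring x v hv hvW hvWb
    rw [hZw, hZx, hZbw, hZbx] at hs
    rw [← Finset.add_sum_erase F (fun j => abar j * Wb' j x / (Wb j x - 1 / v)) hi,
        ← Finset.add_sum_erase F (fun j => abar j / (v ^ 2 * (Wb j x - 1 / v))) hi] at hs
    have e1 : abar i * Wb' i x / (Wb i x - 1 / v)
        = abar i * Wb' i x * v / (Wb i x * v - 1) := by
      rw [div_eq_div_iff hb1v hbv]; field_simp
    have e2 : abar i / (v ^ 2 * (Wb i x - 1 / v)) = abar i / (v * (Wb i x * v - 1)) := by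
      rw [div_eq_div_iff (mul_ne_zero (pow_ne_zero 2 hv) hb1v) (mul_ne_zero hv hbv)]
      field_simp
    have key1 : (Wb i x * v - 1) * (abar i * Wb' i x / (Wb i x - 1 / v))
        = abar i * Wb' i x * v := by
      rw [e1, mul_comm, div_mul_cancel₀ _ hbv]
    have key2 : (Wb i x * v - 1) * (abar i / (v ^ 2 * (Wb i x - 1 / v))) = abar i / v := by
      rw [e2]; field_simp
    rw [hgdef]
    linear_combination (Wb i x * v - 1) * hs
      - v * (r x + ∑ j ∈ F, a j / (v - W j x)) * key1
      + v * (r' x * v + u' x + ∑ j ∈ F, a j * W' j x / (W j x - v)) * key2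
  -- g is continuous at w₀
  have hcont : ContinuousAt g w₀ := by
    have cid : ContinuousAt (fun v : ℂ => v) w₀ := continuousAt_id
    have c1 : ContinuousAt (fun v : ℂ => ∑ j ∈ F, a j / (v - W j x)) w₀ :=
      tendsto_finset_sum F fun j hj =>
        continuousAt_const.div (continuousAt_id.sub continuousAt_const) (hw₀v j hj)
    have c2 : ContinuousAt (fun v : ℂ => ∑ j ∈ F, a j * W' j x / (W j x - v)) w₀ :=
      tendsto_finset_sum F fun j hj =>
        continuousAt_const.div (continuousAt_const.sub continuousAt_id)
          (fun h => hw₀v j hj (by rw [sub_eq_zero] at h ⊢; exact h.symm))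
    have c3 : ContinuousAt
        (fun v : ℂ => ∑ j ∈ F.erase i, abar j * Wb' j x / (Wb j x - 1 / v)) w₀ :=
      tendsto_finset_sum _ fun j hj =>
        continuousAt_const.div
          (continuousAt_const.sub (continuousAt_const.div continuousAt_id hw₀)) (hw₀vb j hj)
    have c4 : ContinuousAt
        (fun v : ℂ => ∑ j ∈ F.erase i, abar j / (v ^ 2 * (Wb j x - 1 / v))) w₀ :=
      tendsto_finset_sum _ fun j hj =>
        continuousAt_const.div
          ((continuousAt_id.pow 2).mul
            (continuousAt_const.sub (continuousAt_const.div continuousAt_id hw₀)))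
          (mul_ne_zero (pow_ne_zero 2 hw₀) (hw₀vb j hj))
    have cA : ContinuousAt (fun v : ℂ =>
        v * (r x + ∑ j ∈ F, a j / (v - W j x))) w₀ := cid.mul (continuousAt_const.add c1)
    have cB : ContinuousAt (fun v : ℂ =>
        (Wb i x * v - 1) * (r' x / v + ubar' x +
          ∑ j ∈ F.erase i, abar j * Wb' j x / (Wb j x - 1 / v))
          + abar i * Wb' i x * v) w₀ :=
      (((continuousAt_const.mul cid).sub continuousAt_const).mul
        (((continuousAt_const.div cid hw₀).add continuousAt_const).add c3)).add
        (continuousAt_const.mul cid)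
    have cC : ContinuousAt (fun v : ℂ =>
        v * (r' x * v + u' x + ∑ j ∈ F, a j * W' j x / (W j x - v))) w₀ :=
      cid.mul (((continuousAt_const.mul cid).add continuousAt_const).add c2)
    have cD : ContinuousAt (fun v : ℂ =>
        (Wb i x * v - 1) * (- r x / v ^ 2 +
          ∑ j ∈ F.erase i, abar j / (v ^ 2 * (Wb j x - 1 / v)))
          + abar i / v) w₀ :=
      (((continuousAt_const.mul cid).sub continuousAt_const).mul
        ((continuousAt_const.div (cid.pow 2) (pow_ne_zero 2 hw₀)).add c4)).add
        (continuousAt_const.div cid hw₀)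
    rw [hgdef]
    exact ((cA.mul cB).sub (cC.mul cD)).sub
      ((continuousAt_const.mul cid).sub continuousAt_const)
  -- hence g w₀ = 0, by density of the admissible set
  have hgw0 : g w₀ = 0 := by
    set S : Finset ℂ := insert 0 ((F.image fun j => W j x) ∪
      (F.image fun j => (Wb j x)⁻¹)) with hS
    have hne : (𝓝[(↑S : Set ℂ)ᶜ] w₀).NeBot :=
      mem_closure_iff_nhdsWithin_neBot.mp ((S.finite_toSet.countable.dense_compl ℂ) w₀)
    have h1 : Tendsto g (𝓝[(↑S : Set ℂ)ᶜ] w₀) (𝓝 (g w₀)) :=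
      hcont.tendsto.mono_left nhdsWithin_le_nhds
    have h2 : Tendsto g (𝓝[(↑S : Set ℂ)ᶜ] w₀) (𝓝 0) := by
      apply Tendsto.congr' _ (tendsto_const_nhds (α := ℂ))
      filter_upwards [eventually_mem_nhdsWithin] with v hv
      simp only [S, Set.mem_compl_iff, Finset.coe_insert, Set.mem_insert_iff, Finset.coe_union,
        Set.mem_union, Finset.coe_image, Set.mem_image, Finset.mem_coe, not_or, not_exists,
        not_and] at hv
      exact (hg0 v hv.1 (fun j hj h => hv.2.1 j hj h.symm)
        (fun j hj h => hv.2.2 j hj h.symm)).symm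
    exact tendsto_nhds_unique h1 h2
  -- key relation obtained from g w₀ = 0
  have hbw₀ : Wb i x * w₀ - 1 = 0 := by rw [hw₀def, mul_inv_cancel₀ hb0, sub_self]
  have hK : r' x * w₀ + u' x + ∑ j ∈ F, a j * W' j x / (W j x - w₀)
      = Wb' i x * w₀ ^ 2 * (r x + ∑ j ∈ F, a j / (w₀ - W j x)) := by
    rw [hgdef] at hgw0
    simp only [hbw₀, zero_mul, add_zero, zero_add, sub_zero] at hgw0
    have hcan : w₀ * (r' x * w₀ + u' x + ∑ j ∈ F, a j * W' j x / (W j x - w₀))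
        * (abar i / w₀)
        = abar i * (r' x * w₀ + u' x + ∑ j ∈ F, a j * W' j x / (W j x - w₀)) := by
      field_simp
    apply mul_left_cancel₀ (habar i hi)
    linear_combination - hgw0 - hcan
  -- rewrite u' x in partial-fraction form
  have hU2 : u' x = (Wb' i x * r x / (Wb i x) ^ 2 - r' x / Wb i x)
      + ∑ j ∈ F, a j * (Wb' i x + (Wb i x) ^ 2 * W' j x)
          / (Wb i x * (1 - Wb i x * W j x)) := by
    have hm : Wb' i x * w₀ ^ 2 * (∑ j ∈ F, a j / (w₀ - W j x))
        - ∑ j ∈ F, a j * W' j x / (W j x - w₀)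
        = ∑ j ∈ F, a j * (Wb' i x + (Wb i x) ^ 2 * W' j x)
            / (Wb i x * (1 - Wb i x * W j x)) := by
      rw [Finset.mul_sum, ← Finset.sum_sub_distrib]
      refine Finset.sum_congr rfl fun j hj => ?_
      have h1 : w₀ - W j x ≠ 0 := hw₀v j hj
      have h1' : W j x - w₀ ≠ 0 := fun h => h1 (by rw [sub_eq_zero] at h ⊢; exact h.symm)
      have h4 : Wb i x * W j x - 1 ≠ 0 := fun h =>
        hWWb j hj i hi x (by linear_combination h)
      rw [hw₀def] at h1 h1' ⊢
      exact taubar_aux_ej (a j) (W' j x) (W j x) (Wb i x) (Wb' i x) hb0 h4 h1 h1'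
    have hww : Wb' i x * w₀ ^ 2 * r x - r' x * w₀
        = Wb' i x * r x / (Wb i x) ^ 2 - r' x / Wb i x := by
      rw [hw₀def]; field_simp
    linear_combination hK + hm - hww
  -- nonvanishing facts at the point w
  have hbw : Wb i x * w - 1 ≠ 0 := by
    intro h
    exact hwWb i hi (eq_inv_of_mul_eq_one_left (by linear_combination h))
  have hb1w : Wb i x - 1 / w ≠ 0 := by
    intro h; apply hbw
    have h' : Wb i x = 1 / w := by linear_combination h
    rw [h']; field_simp; ring
  have hvw : ∀ j ∈ F, W j x - w ≠ 0 := fun j hj h =>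
    hwW j hj (by rw [sub_eq_zero] at h; exact h.symm)
  have hwv : ∀ j ∈ F, w - W j x ≠ 0 := fun j hj => sub_ne_zero.mpr (hwW j hj)
  have hbv : ∀ j ∈ F, Wb i x * W j x - 1 ≠ 0 := fun j hj h =>
    hWWb j hj i hi x (by linear_combination h)
  -- clean forms of the two Gbar factors
  have hGw2 : (1 : ℂ) / (w ^ 2 * (Wb i x - 1 / w)) = 1 / (w * (Wb i x * w - 1)) := by
    rw [div_eq_div_iff (mul_ne_zero (pow_ne_zero 2 hw) hb1w) (mul_ne_zero hw hbw)]
    field_simp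
  have hGx2 : Wb' i x / (Wb i x - 1 / w) = Wb' i x * w / (Wb i x * w - 1) := by
    rw [div_eq_div_iff hb1w hbw]; field_simp
  -- the per-index identities and their sum
  have hperj : ∀ j ∈ F,
      w * (1 / (w * (Wb i x * w - 1)))
          * (a j * (Wb' i x + (Wb i x) ^ 2 * W' j x) / (Wb i x * (1 - Wb i x * W j x)))
        + w * (1 / (w * (Wb i x * w - 1))) * (a j * W' j x / (W j x - w))
        - w * (Wb' i x * w / (Wb i x * w - 1)
            + (1/2) * (r' x / r x - Wb' i x / Wb i x)) * (a j / (w - W j x))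
      = (a j * (W' j x + Wb' i x * (W j x) ^ 2) / (Wb i x * W j x - 1)
          + (1/2) * (r' x / r x - Wb' i x / Wb i x) * a j * W j x) / (W j x - w)
        - ((1/2) * (r' x / r x - Wb' i x / Wb i x) + Wb' i x / Wb i x) * a j := fun j hj =>
    taubar_aux_perj (a j) (W' j x) (W j x) (Wb i x) (Wb' i x)
      ((1/2) * (r' x / r x - Wb' i x / Wb i x)) w hw hb0 (hvw j hj) (hwv j hj)
      (hbv j hj) hbw
  have hsum : ∑ j ∈ F,
      (w * (1 / (w * (Wb i x * w - 1)))
          * (a j * (Wb' i x + (Wb i x) ^ 2 * W' j x) / (Wb i x * (1 - Wb i x * W j x)))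
        + w * (1 / (w * (Wb i x * w - 1))) * (a j * W' j x / (W j x - w))
        - w * (Wb' i x * w / (Wb i x * w - 1)
            + (1/2) * (r' x / r x - Wb' i x / Wb i x)) * (a j / (w - W j x)))
      = ∑ j ∈ F, (a j * (W' j x + Wb' i x * (W j x) ^ 2) / (Wb i x * W j x - 1)
          + (1/2) * (r' x / r x - Wb' i x / Wb i x) * a j * W j x) / (W j x - w) := by
    rw [Finset.sum_congr rfl hperj, Finset.sum_sub_distrib]
    have h0 : ∑ j ∈ F,
        ((1/2) * (r' x / r x - Wb' i x / Wb i x) + Wb' i x / Wb i x) * a j = 0 := by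
      rw [← Finset.mul_sum, hasum, mul_zero]
    rw [h0, sub_zero]
  have hexpand :
      w * (1 / (w * (Wb i x * w - 1)))
          * (∑ j ∈ F, a j * (Wb' i x + (Wb i x) ^ 2 * W' j x)
              / (Wb i x * (1 - Wb i x * W j x)))
        + w * (1 / (w * (Wb i x * w - 1))) * (∑ j ∈ F, a j * W' j x / (W j x - w))
        - w * (Wb' i x * w / (Wb i x * w - 1)
            + (1/2) * (r' x / r x - Wb' i x / Wb i x)) * (∑ j ∈ F, a j / (w - W j x))
      = ∑ j ∈ F,
        (w * (1 / (w * (Wb i x * w - 1)))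
            * (a j * (Wb' i x + (Wb i x) ^ 2 * W' j x) / (Wb i x * (1 - Wb i x * W j x)))
          + w * (1 / (w * (Wb i x * w - 1))) * (a j * W' j x / (W j x - w))
          - w * (Wb' i x * w / (Wb i x * w - 1)
              + (1/2) * (r' x / r x - Wb' i x / Wb i x)) * (a j / (w - W j x))) := by
    rw [Finset.mul_sum, Finset.mul_sum, Finset.mul_sum, ← Finset.sum_add_distrib,
      ← Finset.sum_sub_distrib]
  have hscal := taubar_aux_scal (r x) (r' x) (Wb i x) (Wb' i x)
    ((1/2) * (r' x / r x - Wb' i x / Wb i x)) w hw hb0 hbw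
  -- conclusion
  rw [hGbw, hGbx, hZx, hZw, hGw2, hGx2, hU2]
  linear_combination hscal + hexpand.trans hsum
end

section
/- For i ∈ {0,1,…,n+1} define F⁰_w := r, F⁰_x := r′w + u′/2, and for i ≥ 1, F^i_w := 1/(w − w_i), F^i_x := w_i′/(w_i − w) + (1/2)(r′/r − w_i′/w_i); similarly Ḡ⁰_w := −r/w², Ḡ⁰_x := r′/w + ū′/2, and for i ≥ 1, Ḡ^i_w := 1/(w²(w̄_i − 1/w)), Ḡ^i_x := w̄_i′/(w̄_i − 1/w) + (1/2)(r′/r − w̄_i′/w̄_i). Suppose that for every i ∈ {0,…,n+1} there exist functions α_i, β_i, γ_{i,1},…,γ_{i,n+1} and ᾱ_i, β̄_i, γ̄_{i,1},…,γ̄_{i,n+1} of x such that for all x and all admissible w: w·Ḡ^i_w·Z_x − w·Ḡ^i_x·Z_w = α_i w + β_i + Σ_j γ_{i,j}/(w_j − w) and w·F^i_w·Z̄_x − w·F^i_x·Z̄_w = ᾱ_i/w + β̄_i + Σ_j γ̄_{i,j}/(w̄_j − 1/w). Then for every x there is a constant c(x) ∈ ℂ such that w·Z_w·Z̄_x − w·Z_x·Z̄_w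 = c(x) for all admissible w; i.e., if all the logarithmic flows are tangent to the manifold of logarithmic reductions, the string bracket {z, z̄} is necessarily independent of w. -/
open Finset

lemma vanish (S : Finset ℕ) (p q : ℕ → ℂ)
    (hp0 : ∀ j ∈ S, p j ≠ 0) (hq0 : ∀ j ∈ S, q j ≠ 0)
    (hpd : ∀ i ∈ S, ∀ j ∈ S, i ≠ j → p i ≠ p j)
    (hqd : ∀ i ∈ S, ∀ j ∈ S, i ≠ j → q i ≠ q j)
    (hpq : ∀ i ∈ S, ∀ j ∈ S, p i * q j ≠ 1)
    (A B Ab Bb : ℂ) (Γ Γb : ℕ → ℂ)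
    (h : ∀ w : ℂ, w ≠ 0 → (∀ j ∈ S, w ≠ p j) → (∀ j ∈ S, w ≠ (q j)⁻¹) →
      A * w + B + ∑ j ∈ S, Γ j / (p j - w)
        = Ab / w + Bb + ∑ j ∈ S, Γb j / (q j - 1 / w)) :
    ∀ w : ℂ, w ≠ 0 → (∀ j ∈ S, w ≠ p j) → (∀ j ∈ S, w ≠ (q j)⁻¹) →
      A * w + B + ∑ j ∈ S, Γ j / (p j - w) = Bb := by
  have hall : ∀ w : ℂ,
      (A * w + B) * (w * (∏ k ∈ S, (w - p k)) * ∏ k ∈ S, (w * q k - 1))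
        + ∑ j ∈ S, (-(Γ j)) * (w * (∏ k ∈ S.erase j, (w - p k)) * ∏ k ∈ S, (w * q k - 1))
      = Ab * ((∏ k ∈ S, (w - p k)) * ∏ k ∈ S, (w * q k - 1))
        + Bb * (w * (∏ k ∈ S, (w - p k)) * ∏ k ∈ S, (w * q k - 1))
        + ∑ j ∈ S, Γb j * (w ^ 2 * (∏ k ∈ S, (w - p k)) * ∏ k ∈ S.erase j, (w * q k - 1)) := by
    have hdense : Dense ((↑(insert (0:ℂ) (S.image p ∪ S.image fun j => (q j)⁻¹)) : Set ℂ)ᶜ) :=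
      (insert (0:ℂ) (S.image p ∪ S.image fun j => (q j)⁻¹)).finite_toSet.countable.dense_compl ℂ
    have hcL : Continuous (fun w : ℂ =>
      (A * w + B) * (w * (∏ k ∈ S, (w - p k)) * ∏ k ∈ S, (w * q k - 1))
        + ∑ j ∈ S, (-(Γ j)) * (w * (∏ k ∈ S.erase j, (w - p k)) * ∏ k ∈ S, (w * q k - 1))) := by
      fun_prop
    have hcR : Continuous (fun w : ℂ =>
      Ab * ((∏ k ∈ S, (w - p k)) * ∏ k ∈ S, (w * q k - 1))
        + Bb * (w * (∏ k ∈ S, (w - p k)) * ∏ k ∈ S, (w * q k - 1))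
        + ∑ j ∈ S, Γb j * (w ^ 2 * (∏ k ∈ S, (w - p k)) * ∏ k ∈ S.erase j, (w * q k - 1))) := by
      fun_prop
    have heq := Continuous.ext_on hdense hcL hcR ?_
    · exact fun w => congrFun heq w
    · intro w hw
      have hw' : w ∉ insert (0:ℂ) (S.image p ∪ S.image fun j => (q j)⁻¹) := by
        simpa using hw
      simp only [Finset.mem_insert, Finset.mem_union, Finset.mem_image, not_or, not_exists,
        not_and] at hw'
      obtain ⟨hw0, hwp', hwq'⟩ := hw'
      have hwp : ∀ j ∈ S, w ≠ p j := fun j hj e => hwp' j hj e.symm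
      have hwq : ∀ j ∈ S, w ≠ (q j)⁻¹ := fun j hj e => hwq' j hj e.symm
      have hpw : ∀ j ∈ S, p j - w ≠ 0 := fun j hj => sub_ne_zero.mpr (Ne.symm (hwp j hj))
      have hqw : ∀ j ∈ S, w * q j - 1 ≠ 0 := by
        intro j hj e
        exact hwq j hj (eq_inv_of_mul_eq_one_left (by linear_combination e))
      have key := h w hw0 hwp hwq
      calc (A * w + B) * (w * (∏ k ∈ S, (w - p k)) * ∏ k ∈ S, (w * q k - 1))
            + ∑ j ∈ S, (-(Γ j)) * (w * (∏ k ∈ S.erase j, (w - p k)) * ∏ k ∈ S, (w * q k - 1))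
          = (A * w + B + ∑ j ∈ S, Γ j / (p j - w))
              * (w * (∏ k ∈ S, (w - p k)) * ∏ k ∈ S, (w * q k - 1)) := by
            refine Eq.symm ?_
            rw [add_mul, Finset.sum_mul]
            congr 1
            refine Finset.sum_congr rfl fun j hj => ?_
            rw [← Finset.mul_prod_erase S (fun k => w - p k) hj]
            have h1 : p j - w ≠ 0 := hpw j hj
            field_simp
            ring
        _ = (Ab / w + Bb + ∑ j ∈ S, Γb j / (q j - 1 / w))
              * (w * (∏ k ∈ S, (w - p k)) * ∏ k ∈ S, (w * q k - 1)) := by rw [key]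
        _ = _ := by
            rw [add_mul, add_mul, Finset.sum_mul]
            congr 1
            · congr 1
              rw [div_mul_eq_mul_div, div_eq_iff hw0]
              ring
            refine Finset.sum_congr rfl fun j hj => ?_
            have h2 : w * q j - 1 ≠ 0 := hqw j hj
            have hrepr : q j - 1 / w = (w * q j - 1) / w := by
              rw [sub_div, mul_div_cancel_left₀ _ hw0]
            rw [← Finset.mul_prod_erase S (fun k => w * q k - 1) hj, hrepr,
              div_div_eq_mul_div, div_mul_eq_mul_div, div_eq_iff h2]
            ring
  -- Γ j = 0
  have hΓ : ∀ j ∈ S, Γ j = 0 := by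
    intro j hj
    have e := hall (p j)
    have hPj : (∏ k ∈ S, (p j - p k)) = 0 := Finset.prod_eq_zero hj (sub_self _)
    rw [Finset.sum_eq_single_of_mem j hj (fun m hm hmj => by
        rw [Finset.prod_eq_zero (f := fun k => p j - p k)
          (Finset.mem_erase.mpr ⟨hmj.symm, hj⟩) (sub_self (p j))]
        ring),
      Finset.sum_eq_zero (fun m _ => by rw [hPj]; ring), hPj] at e
    have hC : p j * (∏ k ∈ S.erase j, (p j - p k)) * (∏ k ∈ S, (p j * q k - 1)) ≠ 0 := by
      refine mul_ne_zero (mul_ne_zero (hp0 j hj) ?_) ?_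
      · exact Finset.prod_ne_zero_iff.mpr fun k hk =>
          sub_ne_zero.mpr (hpd j hj k (Finset.mem_of_mem_erase hk)
            (Ne.symm (Finset.mem_erase.mp hk).1))
      · exact Finset.prod_ne_zero_iff.mpr fun k hk => sub_ne_zero.mpr (hpq j hj k hk)
    have e2 : Γ j * (p j * (∏ k ∈ S.erase j, (p j - p k)) * (∏ k ∈ S, (p j * q k - 1))) = 0 := by
      linear_combination -e
    exact (mul_eq_zero.mp e2).resolve_right hC
  -- Γb j = 0
  have hΓb : ∀ j ∈ S, Γb j = 0 := by
    intro j hj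
    have e := hall (q j)⁻¹
    have hQj : (∏ k ∈ S, ((q j)⁻¹ * q k - 1)) = 0 :=
      Finset.prod_eq_zero (f := fun k => (q j)⁻¹ * q k - 1) hj
        (by show (q j)⁻¹ * q j - 1 = 0; rw [inv_mul_cancel₀ (hq0 j hj)]; ring)
    rw [Finset.sum_eq_zero (f := fun m => (-(Γ m)) *
          ((q j)⁻¹ * (∏ k ∈ S.erase m, ((q j)⁻¹ - p k)) * ∏ k ∈ S, ((q j)⁻¹ * q k - 1)))
        (fun m _ => by rw [hQj]; ring),
      Finset.sum_eq_single_of_mem (f := fun m => Γb m *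
          ((q j)⁻¹ ^ 2 * (∏ k ∈ S, ((q j)⁻¹ - p k)) * ∏ k ∈ S.erase m, ((q j)⁻¹ * q k - 1)))
        j hj (fun m hm hmj => by
        show Γb m * ((q j)⁻¹ ^ 2 * (∏ k ∈ S, ((q j)⁻¹ - p k)) *
          ∏ k ∈ S.erase m, ((q j)⁻¹ * q k - 1)) = 0
        rw [Finset.prod_eq_zero (f := fun k => (q j)⁻¹ * q k - 1)
          (Finset.mem_erase.mpr ⟨hmj.symm, hj⟩)
          (by show (q j)⁻¹ * q j - 1 = 0; rw [inv_mul_cancel₀ (hq0 j hj)]; ring)]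
        ring), hQj] at e
    have hC : ((q j)⁻¹ ^ 2 * (∏ k ∈ S, ((q j)⁻¹ - p k)) *
        (∏ k ∈ S.erase j, ((q j)⁻¹ * q k - 1))) ≠ 0 := by
      refine mul_ne_zero (mul_ne_zero (pow_ne_zero 2 (inv_ne_zero (hq0 j hj))) ?_) ?_
      · refine Finset.prod_ne_zero_iff.mpr fun k hk => sub_ne_zero.mpr fun e' => ?_
        exact hpq k hk j hj (by rw [← e', inv_mul_cancel₀ (hq0 j hj)])
      · refine Finset.prod_ne_zero_iff.mpr fun k hk e' => ?_
        have hqq : q j = q k := (inv_mul_eq_one₀ (hq0 j hj)).mp (by linear_combination e')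
        exact hqd j hj k (Finset.mem_of_mem_erase hk)
          (Ne.symm (Finset.mem_erase.mp hk).1) hqq
    have e2 : Γb j * ((q j)⁻¹ ^ 2 * (∏ k ∈ S, ((q j)⁻¹ - p k)) *
        (∏ k ∈ S.erase j, ((q j)⁻¹ * q k - 1))) = 0 := by
      beta_reduce at e
      linear_combination -e
    exact (mul_eq_zero.mp e2).resolve_right hC
  -- Ab = 0
  have hAb : Ab = 0 := by
    have e := hall 0
    rw [Finset.sum_eq_zero (f := fun m => (-(Γ m)) *
          ((0:ℂ) * (∏ k ∈ S.erase m, ((0:ℂ) - p k)) * ∏ k ∈ S, ((0:ℂ) * q k - 1)))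
        (fun m _ => by ring),
      Finset.sum_eq_zero (f := fun m => Γb m *
          ((0:ℂ) ^ 2 * (∏ k ∈ S, ((0:ℂ) - p k)) * ∏ k ∈ S.erase m, ((0:ℂ) * q k - 1)))
        (fun m _ => by ring)] at e
    have hC : (∏ k ∈ S, ((0:ℂ) - p k)) * (∏ k ∈ S, ((0:ℂ) * q k - 1)) ≠ 0 := by
      refine mul_ne_zero (Finset.prod_ne_zero_iff.mpr fun k hk => ?_)
        (Finset.prod_ne_zero_iff.mpr fun k hk => ?_)
      · simpa using hp0 k hk
      · simp
    have e2 : Ab * ((∏ k ∈ S, ((0:ℂ) - p k)) * (∏ k ∈ S, ((0:ℂ) * q k - 1))) = 0 := by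
      linear_combination -e
    exact (mul_eq_zero.mp e2).resolve_right hC
  intro w hw0 hwp hwq
  have key := h w hw0 hwp hwq
  rw [Finset.sum_eq_zero (fun j hj => by rw [hΓ j hj, zero_div]),
    Finset.sum_eq_zero (fun j hj => by rw [hΓb j hj, zero_div]), hAb, zero_div] at key
  rw [Finset.sum_eq_zero (fun j hj => by rw [hΓ j hj, zero_div])]
  simpa using key

lemma form1_add (S : Finset ℕ) (p : ℕ → ℂ) (G : Set ℂ) (f g : ℂ → ℂ)
    (hf : ∃ A B : ℂ, ∃ Γ : ℕ → ℂ, ∀ w ∈ G, f w = A * w + B + ∑ j ∈ S, Γ j / (p j - w))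
    (hg : ∃ A B : ℂ, ∃ Γ : ℕ → ℂ, ∀ w ∈ G, g w = A * w + B + ∑ j ∈ S, Γ j / (p j - w)) :
    ∃ A B : ℂ, ∃ Γ : ℕ → ℂ, ∀ w ∈ G, f w + g w = A * w + B + ∑ j ∈ S, Γ j / (p j - w) := by
  obtain ⟨A1, B1, Γ1, h1⟩ := hf
  obtain ⟨A2, B2, Γ2, h2⟩ := hg
  refine ⟨A1 + A2, B1 + B2, fun j => Γ1 j + Γ2 j, fun w hw => ?_⟩
  rw [h1 w hw, h2 w hw,
    show (∑ j ∈ S, (Γ1 j + Γ2 j) / (p j - w))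
        = (∑ j ∈ S, Γ1 j / (p j - w)) + ∑ j ∈ S, Γ2 j / (p j - w) by
      rw [← Finset.sum_add_distrib]; exact Finset.sum_congr rfl fun j _ => add_div _ _ _]
  ring

lemma form2_add (S : Finset ℕ) (q : ℕ → ℂ) (G : Set ℂ) (f g : ℂ → ℂ)
    (hf : ∃ A B : ℂ, ∃ Γ : ℕ → ℂ, ∀ w ∈ G, f w = A / w + B + ∑ j ∈ S, Γ j / (q j - 1 / w))
    (hg : ∃ A B : ℂ, ∃ Γ : ℕ → ℂ, ∀ w ∈ G, g w = A / w + B + ∑ j ∈ S, Γ j / (q j - 1 / w)) :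
    ∃ A B : ℂ, ∃ Γ : ℕ → ℂ, ∀ w ∈ G, f w + g w = A / w + B + ∑ j ∈ S, Γ j / (q j - 1 / w) := by
  obtain ⟨A1, B1, Γ1, h1⟩ := hf
  obtain ⟨A2, B2, Γ2, h2⟩ := hg
  refine ⟨A1 + A2, B1 + B2, fun j => Γ1 j + Γ2 j, fun w hw => ?_⟩
  rw [h1 w hw, h2 w hw,
    show (∑ j ∈ S, (Γ1 j + Γ2 j) / (q j - 1 / w))
        = (∑ j ∈ S, Γ1 j / (q j - 1 / w)) + ∑ j ∈ S, Γ2 j / (q j - 1 / w) by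
      rw [← Finset.sum_add_distrib]; exact Finset.sum_congr rfl fun j _ => add_div _ _ _,
    add_div]
  ring

lemma form1_smul (S : Finset ℕ) (p : ℕ → ℂ) (G : Set ℂ) (c : ℂ) (f : ℂ → ℂ)
    (hf : ∃ A B : ℂ, ∃ Γ : ℕ → ℂ, ∀ w ∈ G, f w = A * w + B + ∑ j ∈ S, Γ j / (p j - w)) :
    ∃ A B : ℂ, ∃ Γ : ℕ → ℂ, ∀ w ∈ G, c * f w = A * w + B + ∑ j ∈ S, Γ j / (p j - w) := by
  obtain ⟨A1, B1, Γ1, h1⟩ := hf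
  refine ⟨c * A1, c * B1, fun j => c * Γ1 j, fun w hw => ?_⟩
  rw [h1 w hw, mul_add, mul_add, Finset.mul_sum,
    show (∑ j ∈ S, c * (Γ1 j / (p j - w))) = ∑ j ∈ S, c * Γ1 j / (p j - w) from
      Finset.sum_congr rfl fun j _ => by ring]
  ring

lemma form2_smul (S : Finset ℕ) (q : ℕ → ℂ) (G : Set ℂ) (c : ℂ) (f : ℂ → ℂ)
    (hf : ∃ A B : ℂ, ∃ Γ : ℕ → ℂ, ∀ w ∈ G, f w = A / w + B + ∑ j ∈ S, Γ j / (q j - 1 / w)) :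
    ∃ A B : ℂ, ∃ Γ : ℕ → ℂ, ∀ w ∈ G, c * f w = A / w + B + ∑ j ∈ S, Γ j / (q j - 1 / w) := by
  obtain ⟨A1, B1, Γ1, h1⟩ := hf
  refine ⟨c * A1, c * B1, fun j => c * Γ1 j, fun w hw => ?_⟩
  rw [h1 w hw, mul_add, mul_add, Finset.mul_sum,
    show (∑ j ∈ S, c * (Γ1 j / (q j - 1 / w))) = ∑ j ∈ S, c * Γ1 j / (q j - 1 / w) from
      Finset.sum_congr rfl fun j _ => by ring, mul_div_assoc]

lemma form1_sum (S : Finset ℕ) (p : ℕ → ℂ) (G : Set ℂ) (T : Finset ℕ) (f : ℕ → ℂ → ℂ)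
    (hf : ∀ i ∈ T, ∃ A B : ℂ, ∃ Γ : ℕ → ℂ, ∀ w ∈ G,
      f i w = A * w + B + ∑ j ∈ S, Γ j / (p j - w)) :
    ∃ A B : ℂ, ∃ Γ : ℕ → ℂ, ∀ w ∈ G,
      (∑ i ∈ T, f i w) = A * w + B + ∑ j ∈ S, Γ j / (p j - w) := by
  classical
  induction T using Finset.cons_induction with
  | empty => exact ⟨0, 0, fun _ => 0, fun w hw => by simp⟩
  | cons i T hi ih =>
    have h1 := hf i (Finset.mem_cons_self i T)
    have h2 := ih fun j hj => hf j (Finset.mem_cons_of_mem hj)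
    have h3 := form1_add S p G (f i) (fun w => ∑ m ∈ T, f m w) h1 h2
    obtain ⟨A, B, Γ, h4⟩ := h3
    exact ⟨A, B, Γ, fun w hw => by rw [Finset.sum_cons]; exact h4 w hw⟩

lemma form2_sum (S : Finset ℕ) (q : ℕ → ℂ) (G : Set ℂ) (T : Finset ℕ) (f : ℕ → ℂ → ℂ)
    (hf : ∀ i ∈ T, ∃ A B : ℂ, ∃ Γ : ℕ → ℂ, ∀ w ∈ G,
      f i w = A / w + B + ∑ j ∈ S, Γ j / (q j - 1 / w)) :
    ∃ A B : ℂ, ∃ Γ : ℕ → ℂ, ∀ w ∈ G,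
      (∑ i ∈ T, f i w) = A / w + B + ∑ j ∈ S, Γ j / (q j - 1 / w) := by
  classical
  induction T using Finset.cons_induction with
  | empty => exact ⟨0, 0, fun _ => 0, fun w hw => by simp⟩
  | cons i T hi ih =>
    have h1 := hf i (Finset.mem_cons_self i T)
    have h2 := ih fun j hj => hf j (Finset.mem_cons_of_mem hj)
    have h3 := form2_add S q G (f i) (fun w => ∑ m ∈ T, f m w) h1 h2
    obtain ⟨A, B, Γ, h4⟩ := h3
    exact ⟨A, B, Γ, fun w hw => by rw [Finset.sum_cons]; exact h4 w hw⟩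

/-- if all the logarithmic flows are tangent to the manifold of
logarithmic reductions (i.e. all brackets `{𝓗̄_i, z}` and `{𝓗_i, z̄}`,
`i ∈ {0,…,n+1}`, have the appropriate partial-fraction form), then for every `x`
the string bracket `w·Z_w·Z̄_x − w·Z_x·Z̄_w` is independent of `w`. -/
theorem tangency_implies_bracket_constant
    (n : ℕ) (a abar : ℕ → ℂ)
    (r u ubar : ℝ → ℂ) (W Wb : ℕ → ℝ → ℂ)
    (r' u' ubar' : ℝ → ℂ) (W' Wb' : ℕ → ℝ → ℂ)
    (ha : ∀ i ∈ Finset.Icc 1 (n + 1), a i ≠ 0)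
    (habar : ∀ i ∈ Finset.Icc 1 (n + 1), abar i ≠ 0)
    (hasum : ∑ i ∈ Finset.Icc 1 (n + 1), a i = 0)
    (habarsum : ∑ i ∈ Finset.Icc 1 (n + 1), abar i = 0)
    (hr0 : ∀ x, r x ≠ 0)
    (hW0 : ∀ i ∈ Finset.Icc 1 (n + 1), ∀ x : ℝ, W i x ≠ 0)
    (hWb0 : ∀ i ∈ Finset.Icc 1 (n + 1), ∀ x : ℝ, Wb i x ≠ 0)
    (hWdist : ∀ i ∈ Finset.Icc 1 (n + 1), ∀ j ∈ Finset.Icc 1 (n + 1), i ≠ j →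
      ∀ x : ℝ, W i x ≠ W j x)
    (hWbdist : ∀ i ∈ Finset.Icc 1 (n + 1), ∀ j ∈ Finset.Icc 1 (n + 1), i ≠ j →
      ∀ x : ℝ, Wb i x ≠ Wb j x)
    (hWWb : ∀ i ∈ Finset.Icc 1 (n + 1), ∀ j ∈ Finset.Icc 1 (n + 1),
      ∀ x : ℝ, W i x * Wb j x ≠ 1)
    (hdr : ∀ x, HasDerivAt r (r' x) x)
    (hdu : ∀ x, HasDerivAt u (u' x) x)
    (hdubar : ∀ x, HasDerivAt ubar (ubar' x) x)
    (hdW : ∀ i ∈ Finset.Icc 1 (n + 1), ∀ x, HasDerivAt (W i) (W' i x) x)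
    (hdWb : ∀ i ∈ Finset.Icc 1 (n + 1), ∀ x, HasDerivAt (Wb i) (Wb' i x) x)
    -- the rational (in w) partial derivatives of z and z̄
    (Zw Zx Zbw Zbx : ℝ → ℂ → ℂ)
    (hZw : ∀ x w, Zw x w = r x + ∑ i ∈ Finset.Icc 1 (n + 1), a i / (w - W i x))
    (hZx : ∀ x w, Zx x w =
      r' x * w + u' x + ∑ i ∈ Finset.Icc 1 (n + 1), a i * W' i x / (W i x - w))
    (hZbw : ∀ x w, Zbw x w =
      - r x / w ^ 2 + ∑ i ∈ Finset.Icc 1 (n + 1), abar i / (w ^ 2 * (Wb i x - 1 / w)))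
    (hZbx : ∀ x w, Zbx x w =
      r' x / w + ubar' x + ∑ i ∈ Finset.Icc 1 (n + 1), abar i * Wb' i x / (Wb i x - 1 / w))
    -- the string equation
    -- tangency of the τ̄₀-flow: the bracket {𝓗̄₀, z} with Ḡ⁰_w = −r/w², Ḡ⁰_x = r′/w + ū′/2
    (h0 : ∃ α β : ℝ → ℂ, ∃ γ : ℕ → ℝ → ℂ, ∀ (x : ℝ) (w : ℂ), w ≠ 0 →
      (∀ j ∈ Finset.Icc 1 (n + 1), w ≠ W j x) →
      (∀ j ∈ Finset.Icc 1 (n + 1), w ≠ (Wb j x)⁻¹) →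
      w * (- r x / w ^ 2) * Zx x w - w * (r' x / w + ubar' x / 2) * Zw x w
        = α x * w + β x + ∑ j ∈ Finset.Icc 1 (n + 1), γ j x / (W j x - w))
    -- tangency of the τ̄ᵢ-flows, i = 1..n+1
    (h1 : ∀ i ∈ Finset.Icc 1 (n + 1), ∃ α β : ℝ → ℂ, ∃ γ : ℕ → ℝ → ℂ,
      ∀ (x : ℝ) (w : ℂ), w ≠ 0 →
      (∀ j ∈ Finset.Icc 1 (n + 1), w ≠ W j x) →
      (∀ j ∈ Finset.Icc 1 (n + 1), w ≠ (Wb j x)⁻¹) →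
      w * (1 / (w ^ 2 * (Wb i x - 1 / w))) * Zx x w
        - w * (Wb' i x / (Wb i x - 1 / w)
            + (1 / 2) * (r' x / r x - Wb' i x / Wb i x)) * Zw x w
        = α x * w + β x + ∑ j ∈ Finset.Icc 1 (n + 1), γ j x / (W j x - w))
    -- tangency of the τ₀-flow: the bracket {𝓗₀, z̄} with F⁰_w = r, F⁰_x = r′w + u′/2
    (hb0 : ∃ α β : ℝ → ℂ, ∃ γ : ℕ → ℝ → ℂ, ∀ (x : ℝ) (w : ℂ), w ≠ 0 →
      (∀ j ∈ Finset.Icc 1 (n + 1), w ≠ W j x) →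
      (∀ j ∈ Finset.Icc 1 (n + 1), w ≠ (Wb j x)⁻¹) →
      w * r x * Zbx x w - w * (r' x * w + u' x / 2) * Zbw x w
        = α x / w + β x + ∑ j ∈ Finset.Icc 1 (n + 1), γ j x / (Wb j x - 1 / w))
    -- tangency of the τᵢ-flows, i = 1..n+1
    (hb1 : ∀ i ∈ Finset.Icc 1 (n + 1), ∃ α β : ℝ → ℂ, ∃ γ : ℕ → ℝ → ℂ,
      ∀ (x : ℝ) (w : ℂ), w ≠ 0 →
      (∀ j ∈ Finset.Icc 1 (n + 1), w ≠ W j x) →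
      (∀ j ∈ Finset.Icc 1 (n + 1), w ≠ (Wb j x)⁻¹) →
      w * (1 / (w - W i x)) * Zbx x w
        - w * (W' i x / (W i x - w)
            + (1 / 2) * (r' x / r x - W' i x / W i x)) * Zbw x w
        = α x / w + β x + ∑ j ∈ Finset.Icc 1 (n + 1), γ j x / (Wb j x - 1 / w)) :
    ∀ x : ℝ, ∃ c : ℂ, ∀ w : ℂ, w ≠ 0 →
      (∀ j ∈ Finset.Icc 1 (n + 1), w ≠ W j x) →
      (∀ j ∈ Finset.Icc 1 (n + 1), w ≠ (Wb j x)⁻¹) →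
      w * Zw x w * Zbx x w - w * Zx x w * Zbw x w = c := by
  intro x
  classical
  set S := Finset.Icc 1 (n + 1) with hSdef
  set G : Set ℂ :=
    {w : ℂ | w ≠ 0 ∧ (∀ j ∈ S, w ≠ W j x) ∧ (∀ j ∈ S, w ≠ (Wb j x)⁻¹)} with hGdef
  have hmemG : ∀ w : ℂ, w ≠ 0 → (∀ j ∈ S, w ≠ W j x) → (∀ j ∈ S, w ≠ (Wb j x)⁻¹) →
      w ∈ G := fun w h1' h2' h3' => by rw [hGdef]; exact ⟨h1', h2', h3'⟩
  have hGelim : ∀ w ∈ G, w ≠ 0 ∧ (∀ j ∈ S, w ≠ W j x) ∧ (∀ j ∈ S, w ≠ (Wb j x)⁻¹) :=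
    fun w hw => by rw [hGdef] at hw; exact hw
  have hwsub : ∀ w ∈ G, ∀ j ∈ S, w - W j x ≠ 0 :=
    fun w hw j hj => sub_ne_zero.mpr ((hGelim w hw).2.1 j hj)
  have hsubw : ∀ w ∈ G, ∀ j ∈ S, W j x - w ≠ 0 :=
    fun w hw j hj => sub_ne_zero.mpr (Ne.symm ((hGelim w hw).2.1 j hj))
  have hqsub : ∀ w ∈ G, ∀ j ∈ S, Wb j x - 1 / w ≠ 0 := by
    intro w hw j hj e
    apply (hGelim w hw).2.2 j hj
    have e' : Wb j x = 1 / w := sub_eq_zero.mp e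
    rw [e', one_div, inv_inv]
  -- ## the Form-1 decomposition (using the τ̄-flows)
  have key1 : ∀ w ∈ G,
      w * Zw x w * Zbx x w - w * Zx x w * Zbw x w
      = -(w * (- r x / w ^ 2) * Zx x w - w * (r' x / w + ubar' x / 2) * Zw x w)
        + (∑ i ∈ S, (-(abar i)) * (w * (1 / (w ^ 2 * (Wb i x - 1 / w))) * Zx x w
            - w * (Wb' i x / (Wb i x - 1 / w)
              + (1 / 2) * (r' x / r x - Wb' i x / Wb i x)) * Zw x w))
        + (ubar' x / 2 + (1 / 2) * ∑ i ∈ S, abar i * (Wb' i x / Wb i x))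
            * (w * Zw x w) := by
    intro w hw
    have hsum : (∑ i ∈ S, (-(abar i)) * (w * (1 / (w ^ 2 * (Wb i x - 1 / w))) * Zx x w
          - w * (Wb' i x / (Wb i x - 1 / w)
            + (1 / 2) * (r' x / r x - Wb' i x / Wb i x)) * Zw x w))
        = (-(w * Zx x w)) * (∑ i ∈ S, abar i * (1 / (w ^ 2 * (Wb i x - 1 / w))))
          + (w * Zw x w) * (∑ i ∈ S, abar i * (Wb' i x / (Wb i x - 1 / w)
            + (1 / 2) * (r' x / r x - Wb' i x / Wb i x))) := by
      rw [Finset.mul_sum, Finset.mul_sum, ← Finset.sum_add_distrib]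
      exact Finset.sum_congr rfl fun i _ => by ring
    have l1 : Zbw x w
        = - r x / w ^ 2 + ∑ i ∈ S, abar i * (1 / (w ^ 2 * (Wb i x - 1 / w))) := by
      rw [hZbw x w]
      congr 1
      exact Finset.sum_congr rfl fun i _ => by ring
    have e1 : (∑ i ∈ S, abar i * (Wb' i x / (Wb i x - 1 / w)
          + (1 / 2) * (r' x / r x - Wb' i x / Wb i x)))
        = (∑ i ∈ S, abar i * Wb' i x / (Wb i x - 1 / w))
          + (r' x / r x * (1 / 2)) * (∑ i ∈ S, abar i)
          - (1 / 2) * (∑ i ∈ S, abar i * (Wb' i x / Wb i x)) := by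
      rw [Finset.mul_sum, Finset.mul_sum, ← Finset.sum_add_distrib, ← Finset.sum_sub_distrib]
      exact Finset.sum_congr rfl fun i _ => by ring
    have l2 : Zbx x w = (r' x / w + ubar' x / 2)
        + (∑ i ∈ S, abar i * (Wb' i x / (Wb i x - 1 / w)
            + (1 / 2) * (r' x / r x - Wb' i x / Wb i x)))
        + (ubar' x / 2 + (1 / 2) * ∑ i ∈ S, abar i * (Wb' i x / Wb i x)) := by
      rw [hZbx x w, e1, habarsum]
      ring
    rw [hsum, l1, l2]
    ring
  -- ## the Form-2 decomposition (using the τ-flows)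
  have key2 : ∀ w ∈ G,
      w * Zw x w * Zbx x w - w * Zx x w * Zbw x w
      = (w * r x * Zbx x w - w * (r' x * w + u' x / 2) * Zbw x w)
        + (∑ i ∈ S, a i * (w * (1 / (w - W i x)) * Zbx x w
            - w * (W' i x / (W i x - w)
              + (1 / 2) * (r' x / r x - W' i x / W i x)) * Zbw x w))
        + (-(u' x / 2 + (1 / 2) * ∑ i ∈ S, a i * (W' i x / W i x)))
            * (w * Zbw x w) := by
    intro w hw
    have hsum : (∑ i ∈ S, a i * (w * (1 / (w - W i x)) * Zbx x w
          - w * (W' i x / (W i x - w)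
            + (1 / 2) * (r' x / r x - W' i x / W i x)) * Zbw x w))
        = (w * Zbx x w) * (∑ i ∈ S, a i * (1 / (w - W i x)))
          + (-(w * Zbw x w)) * (∑ i ∈ S, a i * (W' i x / (W i x - w)
            + (1 / 2) * (r' x / r x - W' i x / W i x))) := by
      rw [Finset.mul_sum, Finset.mul_sum, ← Finset.sum_add_distrib]
      exact Finset.sum_congr rfl fun i _ => by ring
    have l1 : Zw x w = r x + ∑ i ∈ S, a i * (1 / (w - W i x)) := by
      rw [hZw x w]
      congr 1
      exact Finset.sum_congr rfl fun i _ => by ring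
    have e1 : (∑ i ∈ S, a i * (W' i x / (W i x - w)
          + (1 / 2) * (r' x / r x - W' i x / W i x)))
        = (∑ i ∈ S, a i * W' i x / (W i x - w))
          + (r' x / r x * (1 / 2)) * (∑ i ∈ S, a i)
          - (1 / 2) * (∑ i ∈ S, a i * (W' i x / W i x)) := by
      rw [Finset.mul_sum, Finset.mul_sum, ← Finset.sum_add_distrib, ← Finset.sum_sub_distrib]
      exact Finset.sum_congr rfl fun i _ => by ring
    have l2 : Zx x w = (r' x * w + u' x / 2)
        + (∑ i ∈ S, a i * (W' i x / (W i x - w)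
            + (1 / 2) * (r' x / r x - W' i x / W i x)))
        + (u' x / 2 + (1 / 2) * ∑ i ∈ S, a i * (W' i x / W i x)) := by
      rw [hZx x w, e1, hasum]
      ring
    rw [hsum, l1, l2]
    ring
  -- ## building blocks : w·Z_w and w·Z̄_w
  have hWZw : ∀ w ∈ G, w * Zw x w
      = r x * w + 0 + ∑ j ∈ S, -(a j * W j x) / (W j x - w) := by
    intro w hw
    rw [hZw x w, mul_add, Finset.mul_sum,
      show (∑ j ∈ S, w * (a j / (w - W j x)))
          = ∑ j ∈ S, (a j + -(a j * W j x) / (W j x - w)) from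
        Finset.sum_congr rfl fun j hj => by
          have h1' : w - W j x ≠ 0 := hwsub w hw j hj
          have h2' : W j x - w ≠ 0 := hsubw w hw j hj
          field_simp
          ring,
      Finset.sum_add_distrib, hasum]
    ring
  have hWZbw : ∀ w ∈ G, w * Zbw x w
      = (- r x) / w + 0 + ∑ j ∈ S, (abar j * Wb j x) / (Wb j x - 1 / w) := by
    intro w hw
    have hw0 : w ≠ 0 := (hGelim w hw).1
    rw [hZbw x w, mul_add, Finset.mul_sum,
      show (∑ j ∈ S, w * (abar j / (w ^ 2 * (Wb j x - 1 / w))))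
          = ∑ j ∈ S, (-(abar j) + (abar j * Wb j x) / (Wb j x - 1 / w)) from
        Finset.sum_congr rfl fun j hj => by
          have h2' : Wb j x - 1 / w ≠ 0 := hqsub w hw j hj
          have hrepr : Wb j x - 1 / w = (w * Wb j x - 1) / w := by
            rw [sub_div, mul_div_cancel_left₀ _ hw0]
          have h3' : w * Wb j x - 1 ≠ 0 := fun e => h2' (by rw [hrepr, e, zero_div])
          have hD : w ^ 2 * (Wb j x - 1 / w) = w * (w * Wb j x - 1) := by
            field_simp
          rw [hD, hrepr, div_div_eq_mul_div]
          field_simp [h3']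
          ring,
      Finset.sum_add_distrib, Finset.sum_neg_distrib, habarsum,
      show w * (- r x / w ^ 2) = (- r x) / w from by
        field_simp]
    ring
  -- ## assembling Form 1
  obtain ⟨Aa, Ba, Γa, hfa⟩ : ∃ A B : ℂ, ∃ Γ : ℕ → ℂ, ∀ w ∈ G,
      (w * (- r x / w ^ 2) * Zx x w - w * (r' x / w + ubar' x / 2) * Zw x w)
        = A * w + B + ∑ j ∈ S, Γ j / (W j x - w) := by
    obtain ⟨α, β, γ, hh⟩ := h0
    exact ⟨α x, β x, fun j => γ j x, fun w hw =>
      hh x w (hGelim w hw).1 (hGelim w hw).2.1 (hGelim w hw).2.2⟩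
  obtain ⟨Ab1, Bb1, Γb1, hfb⟩ : ∃ A B : ℂ, ∃ Γ : ℕ → ℂ, ∀ w ∈ G,
      (∑ i ∈ S, (-(abar i)) * (w * (1 / (w ^ 2 * (Wb i x - 1 / w))) * Zx x w
          - w * (Wb' i x / (Wb i x - 1 / w)
            + (1 / 2) * (r' x / r x - Wb' i x / Wb i x)) * Zw x w))
        = A * w + B + ∑ j ∈ S, Γ j / (W j x - w) := by
    refine form1_sum S (fun j => W j x) G S
      (fun i w => (-(abar i)) * (w * (1 / (w ^ 2 * (Wb i x - 1 / w))) * Zx x w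
          - w * (Wb' i x / (Wb i x - 1 / w)
            + (1 / 2) * (r' x / r x - Wb' i x / Wb i x)) * Zw x w)) fun i hi => ?_
    refine form1_smul S (fun j => W j x) G (-(abar i))
      (fun w => (w * (1 / (w ^ 2 * (Wb i x - 1 / w))) * Zx x w
          - w * (Wb' i x / (Wb i x - 1 / w)
            + (1 / 2) * (r' x / r x - Wb' i x / Wb i x)) * Zw x w)) ?_
    obtain ⟨α, β, γ, hh⟩ := h1 i hi
    exact ⟨α x, β x, fun j => γ j x, fun w hw =>
      hh x w (hGelim w hw).1 (hGelim w hw).2.1 (hGelim w hw).2.2⟩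
  obtain ⟨Ac, Bc, Γc, hfc⟩ : ∃ A B : ℂ, ∃ Γ : ℕ → ℂ, ∀ w ∈ G,
      (ubar' x / 2 + (1 / 2) * ∑ i ∈ S, abar i * (Wb' i x / Wb i x)) * (w * Zw x w)
        = A * w + B + ∑ j ∈ S, Γ j / (W j x - w) :=
    form1_smul S (fun j => W j x) G _ (fun w => w * Zw x w)
      ⟨r x, 0, fun j => -(a j * W j x), hWZw⟩
  have hF1 : ∀ w ∈ G, w * Zw x w * Zbx x w - w * Zx x w * Zbw x w
      = (-Aa + Ab1 + Ac) * w + (-Ba + Bb1 + Bc)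
        + ∑ j ∈ S, (-Γa j + Γb1 j + Γc j) / (W j x - w) := by
    intro w hw
    have t1 := hfa w hw
    have t2 := hfb w hw
    have t3 := hfc w hw
    beta_reduce at t1 t2 t3
    rw [key1 w hw, t1, t2, t3,
      show (∑ j ∈ S, (-Γa j + Γb1 j + Γc j) / (W j x - w))
          = ∑ j ∈ S, (-(Γa j / (W j x - w)) + Γb1 j / (W j x - w) + Γc j / (W j x - w)) from
        Finset.sum_congr rfl fun j _ => by ring,
      Finset.sum_add_distrib, Finset.sum_add_distrib, Finset.sum_neg_distrib]
    ring
  -- ## assembling Form 2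
  obtain ⟨Ad, Bd, Γd, hfd⟩ : ∃ A B : ℂ, ∃ Γ : ℕ → ℂ, ∀ w ∈ G,
      (w * r x * Zbx x w - w * (r' x * w + u' x / 2) * Zbw x w)
        = A / w + B + ∑ j ∈ S, Γ j / (Wb j x - 1 / w) := by
    obtain ⟨α, β, γ, hh⟩ := hb0
    exact ⟨α x, β x, fun j => γ j x, fun w hw =>
      hh x w (hGelim w hw).1 (hGelim w hw).2.1 (hGelim w hw).2.2⟩
  obtain ⟨Ae, Be, Γe, hfe⟩ : ∃ A B : ℂ, ∃ Γ : ℕ → ℂ, ∀ w ∈ G,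
      (∑ i ∈ S, a i * (w * (1 / (w - W i x)) * Zbx x w
          - w * (W' i x / (W i x - w)
            + (1 / 2) * (r' x / r x - W' i x / W i x)) * Zbw x w))
        = A / w + B + ∑ j ∈ S, Γ j / (Wb j x - 1 / w) := by
    refine form2_sum S (fun j => Wb j x) G S
      (fun i w => a i * (w * (1 / (w - W i x)) * Zbx x w
          - w * (W' i x / (W i x - w)
            + (1 / 2) * (r' x / r x - W' i x / W i x)) * Zbw x w)) fun i hi => ?_
    refine form2_smul S (fun j => Wb j x) G (a i)
      (fun w => (w * (1 / (w - W i x)) * Zbx x w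
          - w * (W' i x / (W i x - w)
            + (1 / 2) * (r' x / r x - W' i x / W i x)) * Zbw x w)) ?_
    obtain ⟨α, β, γ, hh⟩ := hb1 i hi
    exact ⟨α x, β x, fun j => γ j x, fun w hw =>
      hh x w (hGelim w hw).1 (hGelim w hw).2.1 (hGelim w hw).2.2⟩
  obtain ⟨Af, Bf, Γf, hff⟩ : ∃ A B : ℂ, ∃ Γ : ℕ → ℂ, ∀ w ∈ G,
      (-(u' x / 2 + (1 / 2) * ∑ i ∈ S, a i * (W' i x / W i x))) * (w * Zbw x w)
        = A / w + B + ∑ j ∈ S, Γ j / (Wb j x - 1 / w) :=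
    form2_smul S (fun j => Wb j x) G _ (fun w => w * Zbw x w)
      ⟨- r x, 0, fun j => abar j * Wb j x, hWZbw⟩
  have hF2 : ∀ w ∈ G, w * Zw x w * Zbx x w - w * Zx x w * Zbw x w
      = (Ad + Ae + Af) / w + (Bd + Be + Bf)
        + ∑ j ∈ S, (Γd j + Γe j + Γf j) / (Wb j x - 1 / w) := by
    intro w hw
    have t1 := hfd w hw
    have t2 := hfe w hw
    have t3 := hff w hw
    beta_reduce at t1 t2 t3
    rw [key2 w hw, t1, t2, t3,
      show (∑ j ∈ S, (Γd j + Γe j + Γf j) / (Wb j x - 1 / w))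
          = ∑ j ∈ S, (Γd j / (Wb j x - 1 / w) + Γe j / (Wb j x - 1 / w)
              + Γf j / (Wb j x - 1 / w)) from
        Finset.sum_congr rfl fun j _ => by ring,
      Finset.sum_add_distrib, Finset.sum_add_distrib, add_div, add_div]
    ring
  -- ## conclusion via the rigidity lemma
  refine ⟨Bd + Be + Bf, fun w hw0 hwp hwq => ?_⟩
  have hwG : w ∈ G := hmemG w hw0 hwp hwq
  have hv := vanish S (fun j => W j x) (fun j => Wb j x)
    (fun j hj => hW0 j hj x) (fun j hj => hWb0 j hj x)
    (fun i hi j hj hij => hWdist i hi j hj hij x)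
    (fun i hi j hj hij => hWbdist i hi j hj hij x)
    (fun i hi j hj => hWWb i hi j hj x)
    (-Aa + Ab1 + Ac) (-Ba + Bb1 + Bc) (Ad + Ae + Af) (Bd + Be + Bf)
    (fun j => -Γa j + Γb1 j + Γc j) (fun j => Γd j + Γe j + Γf j)
    (fun w hw0' hwp' hwq' => by
      have hwG' : w ∈ G := hmemG w hw0' hwp' hwq'
      beta_reduce
      rw [← hF1 w hwG', ← hF2 w hwG'])
    w hw0 hwp hwq
  beta_reduce at hv
  rw [hF1 w hwG]
  exact hv
end
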